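/- arXiv:2305.10402 — 11 statements merged into one kernel-verified Lean document; each statement's English description precedes it below -/
import Mathlib

section
/- For all real x with 0 < x < π/2 and all real y ≥ 3, one has 3·sin(x·y) > -y·sin(x). -/
open Real

/-- Concavity of sin: for `0 ≤ x ≤ b ≤ π`, `(x/b) * sin b ≤ sin x`. -/
lemma sin_concave_aux {x b : ℝ} (hx0 : 0 ≤ x) (hxb : x ≤ b) (hb : b ≤ π) (hb0 : 0 < b) :
    x / b * Real.sin b ≤ Real.sin x := by
  have hcc : ConcaveOn ℝ (Set.Icc 0 π) Real.sin := strictConcaveOn_sin_Icc.concaveOn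
  have h0 : (0:ℝ) ∈ Set.Icc 0 π := ⟨le_rfl, Real.pi_pos.le⟩
  have hbm : b ∈ Set.Icc 0 π := ⟨hb0.le, hb⟩
  have hl : (0:ℝ) ≤ 1 - x / b := by
    have : x / b ≤ 1 := (div_le_one hb0).2 hxb
    linarith
  have hr : (0:ℝ) ≤ x / b := div_nonneg hx0 hb0.le
  have key := hcc.2 h0 hbm hl hr (by ring)
  have hxeq : (1 - x / b) • (0:ℝ) + (x / b) • b = x := by
    rw [smul_zero, zero_add, smul_eq_mul, div_mul_cancel₀ x hb0.ne']
  rw [hxeq] at key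
  simpa using key

theorem three_sin_mul_gt (x y : ℝ) (hx0 : 0 < x) (hx : x < π / 2) (hy : 3 ≤ y) :
    3 * Real.sin (x * y) > -y * Real.sin x := by
  have hpi := Real.pi_pos
  have hsx : 0 < Real.sin x := Real.sin_pos_of_pos_of_lt_pi hx0 (by linarith)
  have hy0 : (0:ℝ) < y := by linarith
  set t := x * y with ht
  have ht0 : 0 < t := mul_pos hx0 hy0
  rcases le_or_gt t π with h1 | h1
  · -- sin t ≥ 0, and y * sin x > 0
    have hst : 0 ≤ Real.sin t := Real.sin_nonneg_of_nonneg_of_le_pi ht0.le h1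
    nlinarith
  rcases lt_or_ge t (3 * π / 2) with h2 | h2
  · -- π < t < 3π/2 : use concavity with b = t/3
    have hb0 : 0 < t / 3 := by linarith
    have hxb : x ≤ t / 3 := by
      rw [ht]
      rw [le_div_iff₀ (by norm_num : (0:ℝ) < 3)]
      nlinarith
    have hkey := sin_concave_aux hx0.le hxb (by linarith) hb0
    -- y * sin x ≥ 3 * sin (t/3)
    have h3 : 3 * Real.sin (t / 3) ≤ y * Real.sin x := by
      have hxt : x / (t / 3) * Real.sin (t/3) ≤ Real.sin x := hkey
      have h4 : 3 * Real.sin (t / 3) = (t / (t/3)) * Real.sin (t/3) := by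
        field_simp
      rw [h4]
      calc t / (t/3) * Real.sin (t/3) = y * (x / (t/3) * Real.sin (t/3)) := by
            rw [ht]; field_simp
        _ ≤ y * Real.sin x := by
            apply mul_le_mul_of_nonneg_left hxt hy0.le
    -- sin(t/3) + sin t > 0
    have hsum : 0 < Real.sin (t/3) + Real.sin t := by
      have e1 : t = 2*t/3 + t/3 := by ring
      have e2 : t/3 = 2*t/3 - t/3 := by ring
      have hadd := Real.sin_add (2*t/3) (t/3)
      have hsub := Real.sin_sub (2*t/3) (t/3)
      have hA : 0 < Real.sin (2*t/3) := by
        apply Real.sin_pos_of_pos_of_lt_pi <;> [linarith; linarith]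
      have hB : 0 < Real.cos (t/3) := by
        apply Real.cos_pos_of_mem_Ioo
        constructor <;> [linarith; linarith]
      calc (0:ℝ) < 2 * Real.sin (2*t/3) * Real.cos (t/3) := by positivity
        _ = Real.sin (2*t/3 - t/3) + Real.sin (2*t/3 + t/3) := by
            rw [hadd, hsub]; ring
        _ = Real.sin (t/3) + Real.sin t := by rw [← e1, ← e2]
    nlinarith
  · -- t ≥ 3π/2 : y * sin x > 2t/π ≥ 3 ≥ -3 sin t
    have hlin : 2 / π * x < Real.sin x := Real.mul_lt_sin hx0 hx
    have h3 : 3 ≤ 2 / π * t := by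
      rw [div_mul_eq_mul_div, le_div_iff₀ hpi]
      linarith
    have h4 : 2 / π * t < y * Real.sin x := by
      calc 2 / π * t = y * (2 / π * x) := by rw [ht]; ring
        _ < y * Real.sin x := by apply mul_lt_mul_of_pos_left hlin hy0
    have h5 : -1 ≤ Real.sin t := Real.neg_one_le_sin t
    nlinarith
end

section
/- For all real x with 0 < x ≤ 2π/17, one has tan(x) < x·(1 + x/(2π)). -/
open Real

theorem tan_lt (x : ℝ) (hx0 : 0 < x) (hx : x ≤ 2 * π / 17) :
    Real.tan x < x * (1 + x / (2 * π)) := by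
  have hπ : (0:ℝ) < π := Real.pi_pos
  have hπ4 : π ≤ 4 := Real.pi_le_four
  have hπ3 : 3.141592 < π := Real.pi_gt_d6
  have hx1 : x ≤ 1 := by nlinarith
  have habs : |x| ≤ 1 := by rw [abs_of_pos hx0]; exact hx1
  have hsb := Real.sin_bound habs
  have hcb := Real.cos_bound habs
  rw [abs_of_pos hx0] at hsb hcb
  have hs : Real.sin x ≤ x - x ^ 3 / 6 + x ^ 4 * (5 / 96) := by
    have := abs_le.1 hsb
    linarith [this.2, mul_nonneg (pow_pos hx0 4).le (sub_nonneg.2 hx1), pow_pos hx0 4]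
  have hc : 1 - x ^ 2 / 2 - x ^ 4 * (5 / 96) ≤ Real.cos x := by
    have := abs_le.1 hcb
    linarith [this.1]
  have hcos : 0 < Real.cos x := by nlinarith [pow_le_one₀ hx0.le hx1 (n := 2), pow_le_one₀ hx0.le hx1 (n := 4)]
  have h2π : (0:ℝ) < 2 * π := by linarith
  rw [Real.tan_eq_sin_div_cos, div_lt_iff₀ hcos]
  have h1 : (1:ℝ) + x / (2 * π) = (2 * π + x) / (2 * π) := by field_simp
  rw [h1]
  have h2 : x * ((2 * π + x) / (2 * π)) * Real.cos x
      = x * (2 * π + x) * Real.cos x / (2 * π) := by ring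
  rw [h2, lt_div_iff₀ h2π]
  have hπ315 : π < 3.15 := by
    have := Real.pi_lt_d2
    linarith
  have hx37 : x ≤ 0.371 := by nlinarith
  have hfac : 0 ≤ x * (2 * π + x) := by positivity
  have hA : Real.sin x * (2 * π) ≤ (x - x ^ 3 / 6 + x ^ 4 * (5 / 96)) * (2 * π) :=
    mul_le_mul_of_nonneg_right hs h2π.le
  have hB : x * (2 * π + x) * (1 - x ^ 2 / 2 - x ^ 4 * (5 / 96)) ≤ x * (2 * π + x) * Real.cos x :=
    mul_le_mul_of_nonneg_left hc hfac
  have hkey : (x - x ^ 3 / 6 + x ^ 4 * (5 / 96)) * (2 * π)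
      < x * (2 * π + x) * (1 - x ^ 2 / 2 - x ^ 4 * (5 / 96)) := by
    nlinarith [mul_pos hx0 hx0, mul_pos (mul_pos hx0 hx0) hx0,
      mul_nonneg (mul_nonneg hx0.le hx0.le) (sub_nonneg.2 hx37),
      mul_nonneg (mul_nonneg (mul_nonneg hx0.le hx0.le) hx0.le) (sub_nonneg.2 hx37),
      mul_nonneg (mul_nonneg (mul_nonneg (mul_nonneg hx0.le hx0.le) hx0.le) hx0.le) (sub_nonneg.2 hx37),
      mul_nonneg hx0.le (sub_nonneg.2 hx37), sq_nonneg x]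
  linarith
end

section
/- The sequence u_T := T·sin(2π/(3T+2))/sin(Tπ/(3T+2)) is strictly increasing for integers T ≥ 3. -/
open Real

/-- The "sinc" comparison: if `0 < a < b ≤ π` then `a * sin b < b * sin a`. -/
lemma sinc_strict (a b : ℝ) (ha : 0 < a) (hab : a < b) (hb : b ≤ π) :
    a * Real.sin b < b * Real.sin a := by
  have hb0 : 0 < b := ha.trans hab
  have hlt1 : a / b < 1 := (div_lt_one hb0).mpr hab
  have hw1 : (0:ℝ) < 1 - a / b := by linarith
  have hw2 : (0:ℝ) < a / b := by positivity
  have hw3 : (1 - a / b) + a / b = 1 := by ring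
  have key := strictConcaveOn_sin_Icc.2 (Set.mem_Icc.mpr ⟨le_refl 0, Real.pi_pos.le⟩)
    (Set.mem_Icc.mpr ⟨hb0.le, hb⟩) (ne_of_lt hb0) hw1 hw2 hw3
  simp only [smul_eq_mul, mul_zero, Real.sin_zero, zero_add] at key
  rw [div_mul_cancel₀ _ (ne_of_gt hb0)] at key
  -- key : (1 - a/b) * 0 + a/b * sin b < sin a, simplified
  have key2 : a / b * Real.sin b < Real.sin a := by linarith
  rw [div_mul_eq_mul_div, div_lt_iff₀ hb0] at key2
  linarith

theorem u_strictMono (T S : ℕ) (hT : 3 ≤ T) (hTS : T < S) :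
    (T : ℝ) * Real.sin (2 * π / (3 * T + 2)) / Real.sin (T * π / (3 * T + 2)) <
      (S : ℝ) * Real.sin (2 * π / (3 * S + 2)) / Real.sin (S * π / (3 * S + 2)) := by
  have htr : (3:ℝ) ≤ (T:ℝ) := by exact_mod_cast hT
  have htrs : (T:ℝ) < (S:ℝ) := by exact_mod_cast hTS
  have hpi := Real.pi_pos
  set tr := (T:ℝ) with htrdef
  set sr := (S:ℝ) with hsrdef
  have h3T : (0:ℝ) < 3 * tr + 2 := by linarith
  have h3S : (0:ℝ) < 3 * sr + 2 := by linarith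
  set aT := 2 * π / (3 * tr + 2) with haTdef
  set aS := 2 * π / (3 * sr + 2) with haSdef
  set bT := tr * π / (3 * tr + 2) with hbTdef
  set bS := sr * π / (3 * sr + 2) with hbSdef
  have haT0 : 0 < aT := by rw [haTdef]; positivity
  have haS0 : 0 < aS := by rw [haSdef]; positivity
  have hbT0 : 0 < bT := by
    rw [hbTdef]; exact div_pos (mul_pos (by linarith) hpi) h3T
  have haSaT : aS < aT := by
    rw [haTdef, haSdef]
    exact div_lt_div_of_pos_left (by linarith) h3T (by linarith)
  have haTpi : aT < π := by
    rw [haTdef, div_lt_iff₀ h3T]; nlinarith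
  have hbTbS : bT < bS := by
    rw [hbTdef, hbSdef, div_lt_div_iff₀ h3T h3S]
    nlinarith [mul_pos (sub_pos.mpr htrs) hpi]
  have hbSpi : bS < π := by
    rw [hbSdef, div_lt_iff₀ h3S]; nlinarith
  have hbS0 : 0 < bS := hbT0.trans hbTbS
  have hsinaT : 0 < Real.sin aT := Real.sin_pos_of_pos_of_lt_pi haT0 haTpi
  have hsinaS : 0 < Real.sin aS := Real.sin_pos_of_pos_of_lt_pi haS0 (haSaT.trans haTpi)
  have hsinbT : 0 < Real.sin bT := Real.sin_pos_of_pos_of_lt_pi hbT0 (hbTbS.trans hbSpi)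
  have hsinbS : 0 < Real.sin bS := Real.sin_pos_of_pos_of_lt_pi hbS0 hbSpi
  have h1 : aS * Real.sin aT < aT * Real.sin aS :=
    sinc_strict aS aT haS0 haSaT haTpi.le
  have h2 : bT * Real.sin bS < bS * Real.sin bT :=
    sinc_strict bT bS hbT0 hbTbS hbSpi.le
  have hmul : aS * Real.sin aT * (bT * Real.sin bS)
      < aT * Real.sin aS * (bS * Real.sin bT) :=
    mul_lt_mul'' h1 h2 (mul_pos haS0 hsinaT).le (mul_pos hbT0 hsinbS).le
  clear_value tr sr aT aS bT bS
  set c := 2 * π ^ 2 / ((3 * tr + 2) * (3 * sr + 2)) with hcdef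
  have hc : 0 < c := by rw [hcdef]; positivity
  clear_value c
  have haSbT : aS * bT = tr * c := by
    rw [haSdef, hbTdef, hcdef]; field_simp
  have haTbS : aT * bS = sr * c := by
    rw [haTdef, hbSdef, hcdef]; field_simp
  have key : tr * Real.sin aT * Real.sin bS * c
      < sr * Real.sin aS * Real.sin bT * c := by
    calc tr * Real.sin aT * Real.sin bS * c
        = aS * Real.sin aT * (bT * Real.sin bS) := by
          linear_combination -(Real.sin aT * Real.sin bS) * haSbT
      _ < aT * Real.sin aS * (bS * Real.sin bT) := hmul
      _ = sr * Real.sin aS * Real.sin bT * c := by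
          linear_combination (Real.sin aS * Real.sin bT) * haTbS
  have key2 : tr * Real.sin aT * Real.sin bS < sr * Real.sin aS * Real.sin bT :=
    lt_of_mul_lt_mul_right key hc.le
  rw [div_lt_div_iff₀ hsinbT hsinbS]
  exact key2
end

section
/- For every integer T ≥ 3, one has u_T := T·sin(2π/(3T+2))/sin(Tπ/(3T+2)) < 2.5. -/
open Real

lemma chord_sin {x : ℝ} (h0 : 0 ≤ x) (h1 : x ≤ π / 3) :
    3 * Real.sqrt 3 / (2 * π) * x ≤ Real.sin x := by
  have hπ : 0 < π := Real.pi_pos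
  set t : ℝ := 3 * x / π with ht
  have ht0 : 0 ≤ t := by positivity
  have ht1 : t ≤ 1 := by
    rw [ht, div_le_one hπ]; linarith
  have hc := strictConcaveOn_sin_Icc.concaveOn.2
    (show (0:ℝ) ∈ Set.Icc 0 π from Set.mem_Icc.mpr ⟨le_refl (0:ℝ), hπ.le⟩)
    (show π / 3 ∈ Set.Icc 0 π from Set.mem_Icc.mpr ⟨by positivity, by linarith⟩)
    (sub_nonneg.mpr ht1) ht0 (by ring)
  have hxy : (1 - t) • (0:ℝ) + t • (π / 3) = x := by
    rw [ht, smul_eq_mul, smul_eq_mul]; field_simp; ring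
  rw [hxy] at hc
  have h3 : 3 * Real.sqrt 3 / (2 * π) * x = t * (Real.sqrt 3 / 2) := by
    rw [ht]; field_simp
  simp only [Real.sin_pi_div_three, Real.sin_zero, smul_eq_mul, mul_zero, zero_add] at hc
  linarith

theorem u_lt (T : ℕ) (hT : 3 ≤ T) :
    (T : ℝ) * Real.sin (2 * π / (3 * T + 2)) / Real.sin (T * π / (3 * T + 2)) < 2.5 := by
  have hπ : 0 < π := Real.pi_pos
  have hT' : (3:ℝ) ≤ (T:ℝ) := by exact_mod_cast hT
  have hTpos : (0:ℝ) < (T:ℝ) := by linarith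
  have hD : (0:ℝ) < 3 * (T:ℝ) + 2 := by linarith
  have hx0 : 0 < (T:ℝ) * π / (3 * T + 2) := div_pos (mul_pos hTpos hπ) hD
  have hx1 : (T:ℝ) * π / (3 * T + 2) ≤ π / 3 := by
    rw [div_le_div_iff₀ hD (by norm_num : (0:ℝ) < 3)]
    nlinarith
  have hden := chord_sin hx0.le hx1
  have hs3 : (1.7:ℝ) < Real.sqrt 3 := by
    nlinarith [Real.sq_sqrt (by norm_num : (0:ℝ) ≤ 3), Real.sqrt_nonneg 3]
  have hr : 0 < (T:ℝ) / (3 * T + 2) := div_pos hTpos hD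
  have hdenlow : (3 * Real.sqrt 3 / 2) * ((T:ℝ) / (3 * T + 2)) ≤
      Real.sin ((T:ℝ) * π / (3 * T + 2)) := by
    have e2 : 3 * Real.sqrt 3 / (2 * π) * ((T:ℝ) * π / (3 * T + 2)) =
        (3 * Real.sqrt 3 / 2) * ((T:ℝ) / (3 * T + 2)) := by
      field_simp
    linarith [hden, e2.symm.le, e2.le]
  have hdenpos : 0 < Real.sin ((T:ℝ) * π / (3 * T + 2)) := by
    have : 0 < (3 * Real.sqrt 3 / 2) * ((T:ℝ) / (3 * T + 2)) := by
      apply mul_pos _ hr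
      positivity
    linarith
  have hnum : Real.sin (2 * π / (3 * (T:ℝ) + 2)) < 2 * π / (3 * T + 2) :=
    Real.sin_lt (by positivity)
  rw [div_lt_iff₀ hdenpos]
  have hnum' : (T:ℝ) * Real.sin (2 * π / (3 * T + 2)) < 2 * π * ((T:ℝ) / (3 * T + 2)) := by
    have := mul_lt_mul_of_pos_left hnum hTpos
    calc (T:ℝ) * Real.sin (2 * π / (3 * T + 2)) < (T:ℝ) * (2 * π / (3 * T + 2)) := this
      _ = 2 * π * ((T:ℝ) / (3 * T + 2)) := by ring
  have hπlt : π < 3.15 := by linarith [Real.pi_lt_d2]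
  nlinarith [mul_le_mul_of_nonneg_left hdenlow (by norm_num : (0:ℝ) ≤ 2.5), hr, hs3, hπlt]
end

section
/- The sequence v_T := (T+1)·sin(2π/(3T+2))/sin(Tπ/(3T+2)) is strictly decreasing for integers T ≥ 3. -/
open Real

private lemma h_zero : Real.sqrt 3 * Real.sin 0 + 1 - Real.cos 0 = 0 := by simp

private lemma h_convex :
    StrictConvexOn ℝ (Set.Icc (0:ℝ) (2/5))
      (fun x => Real.sqrt 3 * Real.sin x + 1 - Real.cos x) := by
  apply strictConvexOn_of_deriv2_pos (convex_Icc _ _)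
  · exact (Continuous.continuousOn (by continuity))
  · intro x hx
    rw [interior_Icc, Set.mem_Ioo] at hx
    have hd1 : deriv (fun x => Real.sqrt 3 * Real.sin x + 1 - Real.cos x)
        = fun y => Real.sqrt 3 * Real.cos y + Real.sin y := by
      funext y
      have : HasDerivAt (fun x => Real.sqrt 3 * Real.sin x + 1 - Real.cos x)
          (Real.sqrt 3 * Real.cos y + Real.sin y) y := by
        have h1 := ((Real.hasDerivAt_sin y).const_mul (Real.sqrt 3)).add_const 1
        have h2 := h1.sub (Real.hasDerivAt_cos y)
        exact h2.congr_deriv (by ring)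
      exact this.deriv
    have hd2 : (deriv^[2] (fun x => Real.sqrt 3 * Real.sin x + 1 - Real.cos x)) x
        = -(Real.sqrt 3 * Real.sin x) + Real.cos x := by
      show deriv (deriv (fun x => Real.sqrt 3 * Real.sin x + 1 - Real.cos x)) x
        = -(Real.sqrt 3 * Real.sin x) + Real.cos x
      rw [hd1]
      have : HasDerivAt (fun y => Real.sqrt 3 * Real.cos y + Real.sin y)
          (Real.sqrt 3 * -Real.sin x + Real.cos x) x :=
        ((Real.hasDerivAt_cos x).const_mul (Real.sqrt 3)).add (Real.hasDerivAt_sin x)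
      rw [this.deriv]; ring
    rw [hd2]
    have hs : Real.sin x < x := Real.sin_lt hx.1
    have hc : 1 - x ^ 2 / 2 ≤ Real.cos x := Real.one_sub_sq_div_two_le_cos
    have h3 : Real.sqrt 3 ^ 2 = 3 := Real.sq_sqrt (by norm_num)
    have h3n : (0:ℝ) ≤ Real.sqrt 3 := Real.sqrt_nonneg 3
    have h3pos : (0:ℝ) < Real.sqrt 3 := Real.sqrt_pos.2 (by norm_num)
    have h37 : Real.sqrt 3 < 7/4 := by nlinarith
    nlinarith [mul_lt_mul_of_pos_left hs h3pos, mul_lt_mul_of_pos_right h37 hx.1,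
      sq_nonneg x, hx.1, hx.2]

private lemma h_chord {a b : ℝ} (ha : 0 < a) (hab : a < b) (hb : b ≤ 2/5) :
    Real.sqrt 3 * Real.sin a + 1 - Real.cos a
      ≤ (a / b) * (Real.sqrt 3 * Real.sin b + 1 - Real.cos b) := by
  have hb0 : 0 < b := ha.trans hab
  have hμ : 0 < a / b := div_pos ha hb0
  have hμ1 : a / b < 1 := (div_lt_one hb0).2 hab
  have key := (h_convex.convexOn).2 (Set.mem_Icc.2 ⟨le_refl 0, by norm_num⟩)
      (Set.mem_Icc.2 ⟨hb0.le, hb⟩) (by linarith : (0:ℝ) ≤ 1 - a / b) hμ.le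
      (by ring : (1 - a / b) + a / b = 1)
  have hx : (1 - a / b) • (0:ℝ) + (a / b) • b = a := by
    rw [smul_eq_mul, smul_eq_mul, mul_zero, zero_add]
    field_simp
  rw [hx] at key
  simpa [h_zero] using key

private lemma v_eq (T : ℕ) (hT : 1 ≤ T) :
    ((T : ℝ) + 1) * Real.sin (2 * π / (3 * T + 2)) / Real.sin (T * π / (3 * T + 2)) =
    ((T : ℝ) + 1) * (Real.sqrt 3 * Real.sin (4 * π / (3 * (3 * T + 2)))
      + 1 - Real.cos (4 * π / (3 * (3 * T + 2)))) := by
  have hT1 : (1:ℝ) ≤ (T:ℝ) := by exact_mod_cast hT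
  have hN : (0:ℝ) < 3 * (T:ℝ) + 2 := by linarith
  set u : ℝ := (T:ℝ) * π / (3 * T + 2) with hu
  have hupos : 0 < u := by
    apply div_pos (mul_pos (by linarith) Real.pi_pos) hN
  have hult : u < π := by
    rw [hu, div_lt_iff₀ hN]
    nlinarith [Real.pi_pos]
  have hsinu : 0 < Real.sin u := Real.sin_pos_of_pos_of_lt_pi hupos hult
  have harg : 2 * π / (3 * (T:ℝ) + 2) = π - 3 * u := by
    rw [hu]; field_simp; ring
  have hsin3 : Real.sin (2 * π / (3 * (T:ℝ) + 2))
      = Real.sin u * (1 + 2 * Real.cos (2 * u)) := by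
    rw [harg, Real.sin_pi_sub, Real.sin_three_mul, Real.cos_two_mul]
    have := Real.sin_sq_add_cos_sq u
    nlinarith [this]
  have harg2 : 2 * u = π - π / 3 - 4 * π / (3 * (3 * (T:ℝ) + 2)) := by
    rw [hu]; field_simp; ring
  have hcos2u : Real.cos (2 * u)
      = -(1/2) * Real.cos (4 * π / (3 * (3 * (T:ℝ) + 2)))
        + (Real.sqrt 3 / 2) * Real.sin (4 * π / (3 * (3 * (T:ℝ) + 2))) := by
    rw [harg2, Real.cos_sub, Real.cos_pi_sub, Real.sin_pi_sub,
      Real.cos_pi_div_three, Real.sin_pi_div_three]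
  rw [hsin3, hcos2u]
  field_simp
  ring

theorem v_strictAnti (T S : ℕ) (hT : 3 ≤ T) (hTS : T < S) :
    ((S : ℝ) + 1) * Real.sin (2 * π / (3 * S + 2)) / Real.sin (S * π / (3 * S + 2)) <
      ((T : ℝ) + 1) * Real.sin (2 * π / (3 * T + 2)) / Real.sin (T * π / (3 * T + 2)) := by
  have hS : 1 ≤ S := by omega
  have hT1 : 1 ≤ T := by omega
  rw [v_eq T hT1, v_eq S hS]
  have hTr : (3:ℝ) ≤ (T:ℝ) := by exact_mod_cast hT
  have hTSr : (T:ℝ) < (S:ℝ) := by exact_mod_cast hTS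
  set a := 4 * π / (3 * (3 * (S:ℝ) + 2)) with ha
  set b := 4 * π / (3 * (3 * (T:ℝ) + 2)) with hb
  have hπ : 0 < π := Real.pi_pos
  have hNT : (0:ℝ) < 3 * (T:ℝ) + 2 := by linarith
  have hNS : (0:ℝ) < 3 * (S:ℝ) + 2 := by linarith
  have ha0 : 0 < a := by rw [ha]; positivity
  have hab : a < b := by
    rw [ha, hb]
    apply div_lt_div_of_pos_left (by positivity) (by positivity)
    linarith
  have hb25 : b ≤ 2/5 := by
    rw [hb, div_le_iff₀ (by positivity)]
    have : π < 3.15 := Real.pi_lt_d2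
    nlinarith
  have hbπ : b < π := by
    rw [hb, div_lt_iff₀ (by positivity)]
    nlinarith
  have hhb : 0 < Real.sqrt 3 * Real.sin b + 1 - Real.cos b := by
    have h1 : 0 < Real.sin b := Real.sin_pos_of_pos_of_lt_pi (ha0.trans hab) hbπ
    have h2 : Real.cos b ≤ 1 := Real.cos_le_one b
    have h3 : (0:ℝ) < Real.sqrt 3 := Real.sqrt_pos.2 (by norm_num)
    nlinarith
  have hchord := h_chord ha0 hab hb25
  have hfrac : ((S:ℝ) + 1) * (a / b) < (T:ℝ) + 1 := by
    have hab' : a / b = (3 * (T:ℝ) + 2) / (3 * (S:ℝ) + 2) := by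
      rw [ha, hb]
      field_simp
    rw [hab', ← mul_div_assoc, div_lt_iff₀ hNS]
    nlinarith
  calc ((S:ℝ) + 1) * (Real.sqrt 3 * Real.sin a + 1 - Real.cos a)
      ≤ ((S:ℝ) + 1) * ((a / b) * (Real.sqrt 3 * Real.sin b + 1 - Real.cos b)) := by
        apply mul_le_mul_of_nonneg_left hchord (by linarith)
    _ = (((S:ℝ) + 1) * (a / b)) * (Real.sqrt 3 * Real.sin b + 1 - Real.cos b) := by ring
    _ < ((T:ℝ) + 1) * (Real.sqrt 3 * Real.sin b + 1 - Real.cos b) := by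
        exact mul_lt_mul_of_pos_right hfrac hhb
end

section
/- For every integer T ≥ 3, one has v_T := (T+1)·sin(2π/(3T+2))/sin(Tπ/(3T+2)) < 1/0.345 (in particular v_T < 3). -/
open Real

private lemma sin_ge_poly (x : ℝ) (hx : 0 ≤ x) : x - x ^ 3 / 6 ≤ Real.sin x := by
  have hder : ∀ y : ℝ, HasDerivAt (fun z : ℝ => Real.sin z - z + z ^ 3 / 6)
      (Real.cos y - 1 + 3 * y ^ 2 / 6) y := by
    intro y
    have H := ((Real.hasDerivAt_sin y).sub (hasDerivAt_id' (x := y))).add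
      ((hasDerivAt_pow 3 y).div_const 6)
    exact H.congr_deriv (by push_cast; ring)
  have mono : Monotone (fun z : ℝ => Real.sin z - z + z ^ 3 / 6) :=
    monotone_of_hasDerivAt_nonneg hder (by
      intro y
      have := Real.one_sub_sq_div_two_le_cos (x := y)
      simp only [Pi.zero_apply]
      nlinarith)
  have h := mono hx
  simp only [Real.sin_zero] at h
  nlinarith [h]

private lemma cos_le_poly (x : ℝ) (hx : 0 ≤ x) : Real.cos x ≤ 1 - x ^ 2 / 2 + x ^ 4 / 24 := by
  have hder : ∀ y : ℝ, HasDerivAt (fun z : ℝ => 1 - z ^ 2 / 2 + z ^ 4 / 24 - Real.cos z)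
      (-(2 * y / 2) + 4 * y ^ 3 / 24 + Real.sin y) y := by
    intro y
    have H := ((((hasDerivAt_pow 2 y).div_const 2).const_sub 1).add
      ((hasDerivAt_pow 4 y).div_const 24)).sub (Real.hasDerivAt_cos y)
    refine H.congr_deriv ?_
    push_cast
    ring
  have mono : MonotoneOn (fun z : ℝ => 1 - z ^ 2 / 2 + z ^ 4 / 24 - Real.cos z) (Set.Ici 0) := by
    apply monotoneOn_of_hasDerivWithinAt_nonneg (convex_Ici 0)
      (fun y _ => (hder y).continuousAt.continuousWithinAt)
      (fun y hy => (hder y).hasDerivWithinAt)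
    intro y hy
    rw [interior_Ici] at hy
    have hy0 : (0 : ℝ) ≤ y := le_of_lt hy
    have := sin_ge_poly y hy0
    nlinarith
  have h := mono (Set.self_mem_Ici) (Set.mem_Ici.2 hx) hx
  simp only [Real.cos_zero] at h
  nlinarith [h]

private lemma sin_le_poly (x : ℝ) (hx : 0 ≤ x) :
    Real.sin x ≤ x - x ^ 3 / 6 + x ^ 5 / 120 := by
  have hder : ∀ y : ℝ, HasDerivAt (fun z : ℝ => z - z ^ 3 / 6 + z ^ 5 / 120 - Real.sin z)
      (1 - 3 * y ^ 2 / 6 + 5 * y ^ 4 / 120 - Real.cos y) y := by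
    intro y
    have H := (((hasDerivAt_id' (x := y)).sub ((hasDerivAt_pow 3 y).div_const 6)).add
      ((hasDerivAt_pow 5 y).div_const 120)).sub (Real.hasDerivAt_sin y)
    exact H.congr_deriv (by push_cast; ring)
  have mono : MonotoneOn (fun z : ℝ => z - z ^ 3 / 6 + z ^ 5 / 120 - Real.sin z) (Set.Ici 0) := by
    apply monotoneOn_of_hasDerivWithinAt_nonneg (convex_Ici 0)
      (fun y _ => (hder y).continuousAt.continuousWithinAt)
      (fun y hy => (hder y).hasDerivWithinAt)
    intro y hy
    rw [interior_Ici] at hy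
    have hy0 : (0 : ℝ) ≤ y := le_of_lt hy
    have := cos_le_poly y hy0
    nlinarith
  have h := mono (Set.self_mem_Ici) (Set.mem_Ici.2 hx) hx
  simp only [Real.sin_zero] at h
  nlinarith [h]

private lemma poly_key (t q : ℝ) (ht : 3 ≤ t) (h1 : (9.8696 : ℝ) ≤ q)
    (h2 : q ≤ (9.86961 : ℝ)) :
    (t + 1) * (60 * (3 * t + 2) ^ 4 - 40 * q * (3 * t + 2) ^ 2 + 8 * q ^ 2)
      < (200 / 69) * (30 * t * (3 * t + 2) ^ 4 - 5 * q * t ^ 3 * (3 * t + 2) ^ 2) := by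
  have hu : (0 : ℝ) ≤ t - 3 := by linarith
  have hs2 : (0 : ℝ) < (3 * t + 2) ^ 2 := by positivity
  have ht1 : (0 : ℝ) < t + 1 := by linarith
  have ht3 : (0 : ℝ) < t ^ 3 := by positivity
  have e1 : 40 * (9.8696 : ℝ) * ((t + 1) * (3 * t + 2) ^ 2)
      ≤ 40 * q * ((t + 1) * (3 * t + 2) ^ 2) := by nlinarith [mul_pos ht1 hs2]
  have e2 : q ^ 2 ≤ (9.86961 : ℝ) ^ 2 := by nlinarith
  have e3 : 5 * q * (t ^ 3 * (3 * t + 2) ^ 2)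
      ≤ 5 * (9.86961 : ℝ) * (t ^ 3 * (3 * t + 2) ^ 2) := by nlinarith [mul_pos ht3 hs2]
  have main : (t + 1) * (60 * (3 * t + 2) ^ 4 - 40 * (9.8696 : ℝ) * (3 * t + 2) ^ 2
        + 8 * (9.86961 : ℝ) ^ 2)
      < (200 / 69) * (30 * t * (3 * t + 2) ^ 4
        - 5 * (9.86961 : ℝ) * t ^ 3 * (3 * t + 2) ^ 2) := by
    nlinarith [mul_nonneg hu hu, mul_nonneg (mul_nonneg hu hu) hu,
      mul_nonneg (mul_nonneg (mul_nonneg hu hu) hu) hu,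
      mul_nonneg (mul_nonneg (mul_nonneg (mul_nonneg hu hu) hu) hu) hu]
  nlinarith [main, e1, e2, e3]

theorem v_lt (T : ℕ) (hT : 3 ≤ T) :
    ((T : ℝ) + 1) * Real.sin (2 * π / (3 * T + 2)) / Real.sin (T * π / (3 * T + 2)) < 1 / 0.345 ∧
    ((T : ℝ) + 1) * Real.sin (2 * π / (3 * T + 2)) / Real.sin (T * π / (3 * T + 2)) < 3 := by
  set t : ℝ := (T : ℝ) with ht_def
  have ht : (3 : ℝ) ≤ t := by rw [ht_def]; exact_mod_cast hT
  have hπ0 : (0 : ℝ) < π := Real.pi_pos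
  have hπ1 : (3.141592 : ℝ) < π := Real.pi_gt_d6
  have hπ2 : π < (3.141593 : ℝ) := Real.pi_lt_d6
  have hs : (0 : ℝ) < 3 * t + 2 := by linarith
  have hq1 : (9.8696 : ℝ) ≤ π ^ 2 := by nlinarith
  have hq2 : π ^ 2 ≤ (9.86961 : ℝ) := by nlinarith
  -- positivity of the denominator sine
  have harg_pos : 0 < t * π / (3 * t + 2) := by positivity
  have harg_lt : t * π / (3 * t + 2) < π := by
    rw [div_lt_iff₀ hs]
    nlinarith
  have hsin_pos : 0 < Real.sin (t * π / (3 * t + 2)) :=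
    Real.sin_pos_of_pos_of_lt_pi harg_pos harg_lt
  have key : (t + 1) * Real.sin (2 * π / (3 * t + 2))
      < (200 / 69) * Real.sin (t * π / (3 * t + 2)) := by
    have hx2 : (0 : ℝ) ≤ 2 * π / (3 * t + 2) := by positivity
    have hxt : (0 : ℝ) ≤ t * π / (3 * t + 2) := le_of_lt harg_pos
    have hA := sin_le_poly (2 * π / (3 * t + 2)) hx2
    have hB := sin_ge_poly (t * π / (3 * t + 2)) hxt
    have hmid : (t + 1) * (2 * π / (3 * t + 2) - (2 * π / (3 * t + 2)) ^ 3 / 6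
          + (2 * π / (3 * t + 2)) ^ 5 / 120)
        < (200 / 69) * (t * π / (3 * t + 2) - (t * π / (3 * t + 2)) ^ 3 / 6) := by
      have hkey := poly_key t (π ^ 2) ht hq1 hq2
      have hs5 : (0 : ℝ) < (3 * t + 2) ^ 5 := by positivity
      have hL : (t + 1) * (2 * π / (3 * t + 2) - (2 * π / (3 * t + 2)) ^ 3 / 6
            + (2 * π / (3 * t + 2)) ^ 5 / 120)
          = (π / 30 * ((t + 1) * (60 * (3 * t + 2) ^ 4 - 40 * (π ^ 2) * (3 * t + 2) ^ 2
            + 8 * (π ^ 2) ^ 2))) / (3 * t + 2) ^ 5 := by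
        field_simp
        ring
      have hR : (200 / 69) * (t * π / (3 * t + 2) - (t * π / (3 * t + 2)) ^ 3 / 6)
          = (π / 30 * ((200 / 69) * (30 * t * (3 * t + 2) ^ 4
            - 5 * (π ^ 2) * t ^ 3 * (3 * t + 2) ^ 2))) / (3 * t + 2) ^ 5 := by
        field_simp
        ring
      rw [hL, hR, div_lt_div_iff₀ hs5 hs5]
      exact mul_lt_mul_of_pos_right (mul_lt_mul_of_pos_left hkey (by positivity)) hs5
    calc (t + 1) * Real.sin (2 * π / (3 * t + 2))
        ≤ (t + 1) * (2 * π / (3 * t + 2) - (2 * π / (3 * t + 2)) ^ 3 / 6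
            + (2 * π / (3 * t + 2)) ^ 5 / 120) := by
          apply mul_le_mul_of_nonneg_left hA (by linarith)
      _ < (200 / 69) * (t * π / (3 * t + 2) - (t * π / (3 * t + 2)) ^ 3 / 6) := hmid
      _ ≤ (200 / 69) * Real.sin (t * π / (3 * t + 2)) := by
          apply mul_le_mul_of_nonneg_left hB (by norm_num)
  have h1 : (t + 1) * Real.sin (2 * π / (3 * t + 2))
      / Real.sin (t * π / (3 * t + 2)) < 1 / 0.345 := by
    rw [show ((1 : ℝ) / 0.345) = 200 / 69 by norm_num]
    rw [div_lt_iff₀ hsin_pos]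
    exact key
  exact ⟨h1, lt_trans h1 (by norm_num)⟩
end

section
/- For every integer T ≥ 5 and every real γ with 0 < γ < π/(6T+2), one has v_T·sin((2T+1)γ) − (3T+1)·sin(γ) − sin((3T+1)γ) < 0, where v_T = (T+1)·sin(2π/(3T+2))/sin(Tπ/(3T+2)). -/
open Real
set_option maxHeartbeats 1000000

lemma sin_lb_cubic : ∀ x : ℝ, 0 ≤ x → x - x^3/6 ≤ Real.sin x := by
  have hd : ∀ x : ℝ, HasDerivAt (fun y : ℝ => Real.sin y - y + y^3/6)
      (Real.cos x - 1 + 3*x^2/6) x := by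
    intro x
    have h := ((Real.hasDerivAt_sin x).sub (hasDerivAt_id x)).add
      ((hasDerivAt_pow 3 x).div_const 6)
    exact h.congr_deriv (by norm_num)
  have hmono : Monotone (fun y : ℝ => Real.sin y - y + y^3/6) := by
    apply monotone_of_deriv_nonneg
    · intro x; exact (hd x).differentiableAt
    · intro x
      rw [(hd x).deriv]
      nlinarith [Real.one_sub_sq_div_two_le_cos (x := x)]
  intro x hx
  have h := hmono hx
  simp only [Real.sin_zero] at h
  nlinarith [h]

lemma cos_ub_quartic : ∀ x : ℝ, 0 ≤ x → Real.cos x ≤ 1 - x^2/2 + x^4/24 := by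
  have hd : ∀ x : ℝ, HasDerivAt (fun y : ℝ => 1 - y^2/2 + y^4/24 - Real.cos y)
      (0 - 2*x/2 + 4*x^3/24 - (-Real.sin x)) x := by
    intro x
    have h := (((hasDerivAt_const x (1:ℝ)).sub
      ((hasDerivAt_pow 2 x).div_const 2)).add
      ((hasDerivAt_pow 4 x).div_const 24)).sub (Real.hasDerivAt_cos x)
    exact h.congr_deriv (by norm_num)
  have hmono : MonotoneOn (fun y : ℝ => 1 - y^2/2 + y^4/24 - Real.cos y) (Set.Ici 0) := by
    apply monotoneOn_of_deriv_nonneg (convex_Ici 0)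
    · exact Continuous.continuousOn (by continuity)
    · intro x _
      exact (hd x).differentiableAt.differentiableWithinAt
    · intro x hx
      simp only [interior_Ici, Set.mem_Ioi] at hx
      rw [(hd x).deriv]
      have := sin_lb_cubic x (le_of_lt hx)
      nlinarith
  intro x hx
  have h := hmono Set.self_mem_Ici hx hx
  simp only [Real.cos_zero] at h
  nlinarith [h]

lemma sin_ub_quintic : ∀ x : ℝ, 0 ≤ x → Real.sin x ≤ x - x^3/6 + x^5/120 := by
  have hd : ∀ x : ℝ, HasDerivAt (fun y : ℝ => y - y^3/6 + y^5/120 - Real.sin y)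
      (1 - 3*x^2/6 + 5*x^4/120 - Real.cos x) x := by
    intro x
    have h := (((hasDerivAt_id x).sub
      ((hasDerivAt_pow 3 x).div_const 6)).add
      ((hasDerivAt_pow 5 x).div_const 120)).sub (Real.hasDerivAt_sin x)
    exact h.congr_deriv (by norm_num)
  have hmono : MonotoneOn (fun y : ℝ => y - y^3/6 + y^5/120 - Real.sin y) (Set.Ici 0) := by
    apply monotoneOn_of_deriv_nonneg (convex_Ici 0)
    · exact Continuous.continuousOn (by continuity)
    · intro x _
      exact (hd x).differentiableAt.differentiableWithinAt
    · intro x hx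
      simp only [interior_Ici, Set.mem_Ioi] at hx
      rw [(hd x).deriv]
      have := cos_ub_quartic x (le_of_lt hx)
      nlinarith
  intro x hx
  have h := hmono Set.self_mem_Ici hx hx
  simp only [Real.sin_zero] at h
  nlinarith [h]


lemma lemma_real (t : ℝ) (ht : 5 ≤ t) (γ : ℝ) (h0 : 0 < γ) (h1 : γ < π / (6 * t + 2)) :
    (t + 1) * Real.sin (2 * π / (3 * t + 2)) / Real.sin (t * π / (3 * t + 2)) *
        Real.sin ((2 * t + 1) * γ) -
      (3 * t + 1) * Real.sin γ - Real.sin ((3 * t + 1) * γ) < 0 := by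
  have hπl : (3.1415:ℝ) < π := by
    have := Real.pi_gt_d6; linarith
  have hπu : π < (3.1416:ℝ) := by
    have := Real.pi_lt_d6; linarith
  have hπ0 : 0 < π := by linarith
  have hn : (17:ℝ) ≤ 3*t+2 := by linarith
  have hn0 : (0:ℝ) < 3*t+2 := by linarith
  have hd0 : (0:ℝ) < 3*t+1 := by linarith
  have hc0 : (0:ℝ) < 2*t+1 := by linarith
  -- sqrt 3 bounds
  have hs3sq : Real.sqrt 3 ^ 2 = 3 := Real.sq_sqrt (by norm_num)
  have hs3nn : 0 ≤ Real.sqrt 3 := Real.sqrt_nonneg 3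
  have hs3l : (1.732:ℝ) ≤ Real.sqrt 3 := by nlinarith
  have hs3u : Real.sqrt 3 ≤ (1.7321:ℝ) := by nlinarith
  -- lower bound for sin(tπ/(3t+2))
  set b : ℝ := 2*π/(3*(3*t+2)) with hbdef
  have hb0 : 0 < b := by positivity
  have hbn : b * (3*t+2) = 2*π/3 := by
    rw [hbdef]; field_simp
  have hbu : b ≤ 0.1233 := by
    rw [hbdef, div_le_iff₀ (by linarith)]
    nlinarith
  have hEq : t*π/(3*t+2) = π/3 - b := by
    rw [hbdef]; field_simp; ring
  have hsT : (0.866*(3*t+2) - 1.16)/(3*t+2) ≤ Real.sin (t*π/(3*t+2)) := by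
    rw [hEq, Real.sin_sub, Real.sin_pi_div_three, Real.cos_pi_div_three]
    have hcb : 1 - b^2/2 ≤ Real.cos b := Real.one_sub_sq_div_two_le_cos
    have hsb : Real.sin b ≤ b := Real.sin_le hb0.le
    have step : Real.sqrt 3 / 2 * (1 - b^2/2) - 1/2 * b ≤
        Real.sqrt 3 / 2 * Real.cos b - 1/2 * Real.sin b := by
      have := mul_le_mul_of_nonneg_left hcb (by positivity : (0:ℝ) ≤ Real.sqrt 3 / 2)
      linarith
    refine le_trans ?_ step
    rw [div_le_iff₀ hn0]
    have u1 : b*(3*t+2) ≤ 2.0944 := by rw [hbn]; linarith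
    have u2 : b*(b*(3*t+2)) ≤ 0.1233*2.0944 := by
      have := mul_le_mul hbu u1 (by positivity) (by norm_num)
      linarith
    have u3 : Real.sqrt 3 * (b*(b*(3*t+2))) ≤ 1.7321*(0.1233*2.0944) := by
      have hnn : 0 ≤ b*(b*(3*t+2)) := by positivity
      have := mul_le_mul hs3u u2 hnn (by norm_num)
      linarith
    have u4 : 0 ≤ (Real.sqrt 3 - 1.732) * (3*t+2) := by
      apply mul_nonneg (by linarith) hn0.le
    nlinarith [hbn]
  have hW0 : (0:ℝ) < 0.866*(3*t+2) - 1.16 := by linarith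
  have hsT0 : 0 < Real.sin (t*π/(3*t+2)) :=
    lt_of_lt_of_le (by positivity) hsT
  -- upper bound on sin(2π/(3t+2))
  have h2πn0 : 0 ≤ 2*π/(3*t+2) := by positivity
  have hs2u : Real.sin (2*π/(3*t+2)) ≤ 6.2832/(3*t+2) := by
    refine le_trans (Real.sin_le h2πn0) ?_
    rw [div_le_div_iff₀ hn0 hn0]
    nlinarith [mul_lt_mul_of_pos_right hπu hn0]
  have hs2nn : 0 ≤ Real.sin (2*π/(3*t+2)) := by
    apply Real.sin_nonneg_of_nonneg_of_le_pi h2πn0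
    rw [div_le_iff₀ hn0]; nlinarith
  -- bound on v
  have hv : (t+1) * Real.sin (2*π/(3*t+2)) / Real.sin (t*π/(3*t+2)) ≤
      6.2832*(t+1)/(0.866*(3*t+2) - 1.16) := by
    have h1' : (t+1) * Real.sin (2*π/(3*t+2)) ≤ (t+1) * (6.2832/(3*t+2)) :=
      mul_le_mul_of_nonneg_left hs2u (by linarith)
    have step := div_le_div₀ (by positivity : (0:ℝ) ≤ (t+1)*(6.2832/(3*t+2)))
      h1' ((div_pos hW0 hn0)) (by
        calc (0.866*(3*t+2) - 1.16)/(3*t+2) ≤ Real.sin (t*π/(3*t+2)) := hsT)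
    refine le_of_le_of_eq step ?_
    field_simp
  -- gamma range facts
  have hγd : γ * (6*t+2) < 3.1416 := by
    rw [lt_div_iff₀ (by linarith : (0:ℝ) < 6*t+2)] at h1
    nlinarith
  have hγ2 : γ^2*(3*t+1)^2 < 2.4675 := by
    nlinarith [mul_pos h0 (by linarith : (0:ℝ) < 6*t+2)]
  -- sin bounds at the three arguments
  have hcγ : (0:ℝ) ≤ (2*t+1)*γ := by positivity
  have hsc_ub := sin_ub_quintic ((2*t+1)*γ) hcγ
  have hsc_nn : 0 ≤ Real.sin ((2*t+1)*γ) := by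
    apply Real.sin_nonneg_of_nonneg_of_le_pi hcγ
    rw [lt_div_iff₀ (by linarith : (0:ℝ) < 6*t+2)] at h1
    nlinarith
  have hsγ := sin_lb_cubic γ h0.le
  have hsdγ := sin_lb_cubic ((3*t+1)*γ) (by positivity)
  -- combine with v bound
  have hV0 : (0:ℝ) ≤ 6.2832*(t+1)/(0.866*(3*t+2) - 1.16) := by positivity
  have hvsc : (t+1) * Real.sin (2*π/(3*t+2)) / Real.sin (t*π/(3*t+2)) *
      Real.sin ((2*t+1)*γ) ≤
      6.2832*(t+1)/(0.866*(3*t+2) - 1.16) *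
        ((2*t+1)*γ - ((2*t+1)*γ)^3/6 + ((2*t+1)*γ)^5/120) :=
    mul_le_mul hv hsc_ub hsc_nn hV0
  -- polynomial certificates
  have q1 : (0:ℝ) ≤ t - 5 := by linarith
  have q2 : (0:ℝ) ≤ (t-5)^2 := by positivity
  have q3 : (0:ℝ) ≤ (t-5)^3 := by positivity
  have q4 : (0:ℝ) ≤ (t-5)^4 := by positivity
  have q5 : (0:ℝ) ≤ (t-5)^5 := by positivity
  have q6 : (0:ℝ) ≤ (t-5)^6 := by positivity
  have hM : (0:ℝ) ≤ ((3*t+1)+(3*t+1)^3) * (0.866*(3*t+2) - 1.16)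
      - 6.2832*(t+1)*(2*t+1)^3 := by nlinarith [q1, q2, q3, q4]
  have hP2 : 120*(3*t+1)^4*(6.2832*(t+1)*(2*t+1) - 2*(3*t+1)*(0.866*(3*t+2) - 1.16))
      + 20*2.4675*(3*t+1)^2*(((3*t+1)+(3*t+1)^3)*(0.866*(3*t+2) - 1.16)
          - 6.2832*(t+1)*(2*t+1)^3)
      + 2.4675^2*(6.2832*(t+1)*(2*t+1)^5) < 0 := by
    nlinarith [q1, q2, q3, q4, q5, q6]
  -- combine into the key numeric inequality
  have e1 : γ*((3*t+1)^2*(((3*t+1)+(3*t+1)^3)*(0.866*(3*t+2) - 1.16)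
        - 6.2832*(t+1)*(2*t+1)^3))*(γ^2*(3*t+1)^2)
      ≤ γ*((3*t+1)^2*(((3*t+1)+(3*t+1)^3)*(0.866*(3*t+2) - 1.16)
        - 6.2832*(t+1)*(2*t+1)^3))*2.4675 := by
    apply mul_le_mul_of_nonneg_left hγ2.le
    exact mul_nonneg h0.le (mul_nonneg (by positivity) hM)
  have hγ2nn : (0:ℝ) ≤ γ^2*(3*t+1)^2 := by positivity
  have hγ4 : (γ^2*(3*t+1)^2)^2 ≤ 2.4675^2 := by
    have h := mul_le_mul hγ2.le hγ2.le hγ2nn (by norm_num)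
    calc (γ^2*(3*t+1)^2)^2 = (γ^2*(3*t+1)^2)*(γ^2*(3*t+1)^2) := by ring
      _ ≤ 2.4675*2.4675 := h
      _ = 2.4675^2 := by ring
  have e2 : γ*(6.2832*(t+1)*(2*t+1)^5)*((γ^2*(3*t+1)^2)^2)
      ≤ γ*(6.2832*(t+1)*(2*t+1)^5)*2.4675^2 := by
    apply mul_le_mul_of_nonneg_left hγ4
    positivity
  have e3 : γ*(120*(3*t+1)^4*(6.2832*(t+1)*(2*t+1) - 2*(3*t+1)*(0.866*(3*t+2) - 1.16))
      + 20*2.4675*(3*t+1)^2*(((3*t+1)+(3*t+1)^3)*(0.866*(3*t+2) - 1.16)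
          - 6.2832*(t+1)*(2*t+1)^3)
      + 2.4675^2*(6.2832*(t+1)*(2*t+1)^5)) < 0 :=
    mul_neg_of_pos_of_neg h0 hP2
  have hG : 120*(3*t+1)^4*
      (γ*(6.2832*(t+1)*(2*t+1) - 2*(3*t+1)*(0.866*(3*t+2) - 1.16))
        + γ^3*(((3*t+1)+(3*t+1)^3)*(0.866*(3*t+2) - 1.16) - 6.2832*(t+1)*(2*t+1)^3)/6
        + γ^5*(6.2832*(t+1)*(2*t+1)^5)/120) < 0 := by
    linarith [e1, e2, e3]
  have hfin' : γ*(6.2832*(t+1)*(2*t+1) - 2*(3*t+1)*(0.866*(3*t+2) - 1.16))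
        + γ^3*(((3*t+1)+(3*t+1)^3)*(0.866*(3*t+2) - 1.16) - 6.2832*(t+1)*(2*t+1)^3)/6
        + γ^5*(6.2832*(t+1)*(2*t+1)^5)/120 < 0 := by
    by_contra hcon
    push_neg at hcon
    have hmm := mul_nonneg (by positivity : (0:ℝ) ≤ 120*(3*t+1)^4) hcon
    linarith [hG, hmm]
  have heq : 6.2832*(t+1)/(0.866*(3*t+2) - 1.16) *
        ((2*t+1)*γ - ((2*t+1)*γ)^3/6 + ((2*t+1)*γ)^5/120)
      - (3*t+1)*(γ - γ^3/6) - ((3*t+1)*γ - ((3*t+1)*γ)^3/6)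
      = (γ*(6.2832*(t+1)*(2*t+1) - 2*(3*t+1)*(0.866*(3*t+2) - 1.16))
        + γ^3*(((3*t+1)+(3*t+1)^3)*(0.866*(3*t+2) - 1.16) - 6.2832*(t+1)*(2*t+1)^3)/6
        + γ^5*(6.2832*(t+1)*(2*t+1)^5)/120)/(0.866*(3*t+2) - 1.16) := by
    rw [eq_div_iff hW0.ne', sub_mul, sub_mul, mul_comm (6.2832*(t+1)/(0.866*(3*t+2) - 1.16)), mul_assoc, div_mul_cancel₀ _ hW0.ne']
    ring
  have hfin : 6.2832*(t+1)/(0.866*(3*t+2) - 1.16) *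
        ((2*t+1)*γ - ((2*t+1)*γ)^3/6 + ((2*t+1)*γ)^5/120)
      - (3*t+1)*(γ - γ^3/6) - ((3*t+1)*γ - ((3*t+1)*γ)^3/6) < 0 := by
    rw [heq]
    exact div_neg_of_neg_of_pos hfin' hW0
  have hmul := mul_le_mul_of_nonneg_left hsγ hd0.le
  linarith [hvsc, hmul, hsdγ, hfin]

theorem lemma_new (T : ℕ) (hT : 5 ≤ T) (γ : ℝ) (h0 : 0 < γ) (h1 : γ < π / (6 * T + 2)) :
    ((T : ℝ) + 1) * Real.sin (2 * π / (3 * T + 2)) / Real.sin (T * π / (3 * T + 2)) *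
        Real.sin ((2 * T + 1) * γ) -
      (3 * T + 1) * Real.sin γ - Real.sin ((3 * T + 1) * γ) < 0 := by
  have ht : (5:ℝ) ≤ (T:ℝ) := by exact_mod_cast hT
  have h := lemma_real (T:ℝ) ht γ h0 (by push_cast at h1 ⊢; convert h1 using 3 <;> norm_num)
  convert h using 5 <;> push_cast <;> ring
end

section
/- For every integer T ≥ 1, setting a = ((2T+1)/(3T+1))·v_T − 1 with v_T = (T+1)·sin(2π/(3T+2))/sin(Tπ/(3T+2)), one has −1 < a < 2. -/
open Real

set_option maxHeartbeats 1000000 in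
theorem a_bounds (T : ℕ) (hT : 1 ≤ T) :
    -1 < (2 * (T : ℝ) + 1) / (3 * T + 1) *
        (((T : ℝ) + 1) * Real.sin (2 * π / (3 * T + 2)) / Real.sin (T * π / (3 * T + 2))) - 1 ∧
    (2 * (T : ℝ) + 1) / (3 * T + 1) *
        (((T : ℝ) + 1) * Real.sin (2 * π / (3 * T + 2)) / Real.sin (T * π / (3 * T + 2))) - 1 < 2 := by
  have hT1 : (1 : ℝ) ≤ (T : ℝ) := by exact_mod_cast hT
  have hpi := Real.pi_pos
  have hden : (0:ℝ) < 3 * (T:ℝ) + 2 := by linarith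
  set θ : ℝ := (T:ℝ) * π / (3 * (T:ℝ) + 2) with hθdef
  set s : ℝ := Real.sin θ with hsdef
  have hθpos : 0 < θ := by positivity
  have hθlt : θ < π / 3 := by
    rw [hθdef, div_lt_div_iff₀ hden (by norm_num : (0:ℝ) < 3)]
    nlinarith
  have hθltpi : θ < π := by nlinarith
  have hspos : 0 < s := Real.sin_pos_of_pos_of_lt_pi hθpos hθltpi
  have hsne : s ≠ 0 := ne_of_gt hspos
  -- s < √3/2
  have hslt : s < Real.sqrt 3 / 2 := by
    have := Real.sin_lt_sin_of_lt_of_le_pi_div_two (by linarith : -(π/2) ≤ θ)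
      (by linarith : π/3 ≤ π/2) hθlt
    rwa [Real.sin_pi_div_three] at this
  -- chord lower bound for s via concavity
  set t : ℝ := 3 * (T:ℝ) / (3 * (T:ℝ) + 2) with htdef
  have ht0 : 0 ≤ t := by positivity
  have ht1 : t ≤ 1 := by
    rw [htdef, div_le_one hden]; linarith
  have hchord : t * (Real.sqrt 3 / 2) ≤ s := by
    have h0mem : (0:ℝ) ∈ Set.Icc (0:ℝ) π := ⟨le_refl _, le_of_lt hpi⟩
    have h3mem : (π/3 : ℝ) ∈ Set.Icc (0:ℝ) π := ⟨by positivity, by linarith⟩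
    have := strictConcaveOn_sin_Icc.concaveOn.2 h0mem h3mem
      (by linarith : (0:ℝ) ≤ 1 - t) ht0 (by ring)
    simp only [smul_eq_mul, mul_zero, Real.sin_zero, zero_add] at this
    have hθeq : t * (π/3) = θ := by
      rw [htdef, hθdef]; field_simp
    rw [hθeq, Real.sin_pi_div_three] at this
    simpa [hsdef] using this
  -- rewrite the sine expression
  have h1 : 2 * π / (3 * (T:ℝ) + 2) = π - 3 * θ := by
    rw [hθdef]; field_simp; ring
  have hs2 : Real.sin (2 * π / (3 * (T:ℝ) + 2)) = 3 * s - 4 * s ^ 3 := by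
    rw [h1, Real.sin_pi_sub, Real.sin_three_mul]
  have hrw : ((T:ℝ) + 1) * Real.sin (2 * π / (3 * (T:ℝ) + 2)) / Real.sin ((T:ℝ) * π / (3 * (T:ℝ) + 2))
      = ((T:ℝ) + 1) * (3 - 4 * s ^ 2) := by
    rw [hs2]
    rw [show Real.sin ((T:ℝ) * π / (3 * (T:ℝ) + 2)) = s from rfl]
    field_simp
  rw [hrw]
  have h31 : (0:ℝ) < 3 * (T:ℝ) + 1 := by linarith
  have hr3 : Real.sqrt 3 ^ 2 = 3 := Real.sq_sqrt (by norm_num)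
  have hrpos : 0 < Real.sqrt 3 := Real.sqrt_pos.2 (by norm_num)
  constructor
  · -- lower bound: expression positive since s² < 3/4
    have hs2lt : s ^ 2 < 3 / 4 := by nlinarith
    have hpos : 0 < (2 * (T:ℝ) + 1) / (3 * (T:ℝ) + 1) * (((T:ℝ) + 1) * (3 - 4 * s ^ 2)) := by
      apply mul_pos
      · positivity
      · apply mul_pos (by linarith)
        nlinarith
    linarith
  · -- upper bound
    have hkey : (2 * (T:ℝ) + 1) * (((T:ℝ) + 1) * (3 - 4 * s ^ 2)) < 3 * (3 * (T:ℝ) + 1) := by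
      have hsq : 27 * (T:ℝ) ^ 2 ≤ 4 * s ^ 2 * (3 * (T:ℝ) + 2) ^ 2 := by
        have h2 : 3 * (T:ℝ) * (Real.sqrt 3 / 2) ≤ s * (3 * (T:ℝ) + 2) := by
          have := mul_le_mul_of_nonneg_right hchord (le_of_lt hden)
          rw [htdef] at this
          calc 3 * (T:ℝ) * (Real.sqrt 3 / 2)
              = 3 * (T:ℝ) / (3 * (T:ℝ) + 2) * (Real.sqrt 3 / 2) * (3 * (T:ℝ) + 2) := by
                field_simp
            _ ≤ s * (3 * (T:ℝ) + 2) := this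
        have hsq' : (3 * (T:ℝ) * (Real.sqrt 3 / 2)) ^ 2 ≤ (s * (3 * (T:ℝ) + 2)) ^ 2 :=
          pow_le_pow_left₀ (by positivity) h2 2
        nlinarith [hsq']
      have hT0 : (0:ℝ) < (T:ℝ) := by linarith
      have hmul : 27 * (T:ℝ) ^ 2 * ((2 * (T:ℝ) + 1) * ((T:ℝ) + 1))
          ≤ 4 * s ^ 2 * (3 * (T:ℝ) + 2) ^ 2 * ((2 * (T:ℝ) + 1) * ((T:ℝ) + 1)) :=
        mul_le_mul_of_nonneg_right hsq (by positivity)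
      have goal2 : (2 * (T:ℝ) + 1) * (((T:ℝ) + 1) * (3 - 4 * s ^ 2)) * (3 * (T:ℝ) + 2) ^ 2
          < 3 * (3 * (T:ℝ) + 1) * (3 * (T:ℝ) + 2) ^ 2 := by
        have hpoly : 3 * (2 * (T:ℝ) + 1) * ((T:ℝ) + 1) * (3 * (T:ℝ) + 2) ^ 2
            - 27 * (T:ℝ) ^ 2 * ((2 * (T:ℝ) + 1) * ((T:ℝ) + 1))
            < 3 * (3 * (T:ℝ) + 1) * (3 * (T:ℝ) + 2) ^ 2 := by
          nlinarith [mul_pos (mul_pos hT0 hT0) hT0, mul_pos hT0 hT0]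
        linarith [hmul, hpoly]
      exact lt_of_mul_lt_mul_right goal2 (by positivity : (0:ℝ) ≤ (3 * (T:ℝ) + 2) ^ 2)
    have hdiv : (2 * (T:ℝ) + 1) * (((T:ℝ) + 1) * (3 - 4 * s ^ 2)) / (3 * (T:ℝ) + 1) < 3 := by
      rw [div_lt_iff₀ h31]; linarith [hkey]
    rw [div_mul_eq_mul_div]
    linarith [hdiv]
end

section
/- For every integer T ≥ 1, every root of the derivative of S₄^{(T)}(z) := z + ((2T+1)/(3T+1))·a_T·z^{T+1} + ((T+1)/(3T+1))·a_T·z^{2T+1} + (1/(3T+1))·z^{3T+1} (with a_T = sin(2π/(3T+2))/sin(Tπ/(3T+2))) is a complex number of modulus 1, and all 3T roots are pairwise distinct. -/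
open Real Polynomial

private lemma b_bounds (T : ℕ) (hT : 1 ≤ T) :
    0 < Real.sin (2 * π / (3 * (T:ℝ) + 2)) / Real.sin ((T:ℝ) * π / (3 * (T:ℝ) + 2)) ∧
    ((T:ℝ) + 1) * (2 * (T:ℝ) + 1) / (3 * (T:ℝ) + 1) *
      (Real.sin (2 * π / (3 * (T:ℝ) + 2)) / Real.sin ((T:ℝ) * π / (3 * (T:ℝ) + 2))) < 3 := by
  have ht : (1:ℝ) ≤ (T:ℝ) := by exact_mod_cast hT
  have hpi := Real.pi_pos
  have hn : (0:ℝ) < 3 * (T:ℝ) + 2 := by linarith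
  have hs1 : 0 < Real.sin (2 * π / (3 * (T:ℝ) + 2)) := by
    apply Real.sin_pos_of_pos_of_lt_pi (by positivity)
    rw [div_lt_iff₀ hn]; nlinarith
  have hs2 : 0 < Real.sin ((T:ℝ) * π / (3 * (T:ℝ) + 2)) := by
    apply Real.sin_pos_of_pos_of_lt_pi (by positivity)
    rw [div_lt_iff₀ hn]; nlinarith
  refine ⟨div_pos hs1 hs2, ?_⟩
  rw [div_mul_div_comm, div_lt_iff₀ (by positivity)]
  obtain rfl | rfl | hT3 : T = 1 ∨ T = 2 ∨ 3 ≤ T := by omega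
  · push_cast at hs1 hs2 ⊢
    norm_num at hs1 hs2 ⊢
    have hsin2 : Real.sin (2 * π / 5) = 2 * Real.sin (π/5) * Real.cos (π/5) := by
      rw [show 2*π/5 = 2*(π/5) by ring, Real.sin_two_mul]
    have hc : Real.cos (π/5) < Real.cos 0 :=
      Real.cos_lt_cos_of_nonneg_of_le_pi le_rfl (by linarith) (by positivity)
    rw [Real.cos_zero] at hc
    have hs : 0 < Real.sin (π/5) := Real.sin_pos_of_pos_of_lt_pi (by positivity) (by linarith)
    nlinarith
  · push_cast at hs1 hs2 ⊢
    norm_num at hs1 hs2 ⊢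
    nlinarith
  · have ht3 : (3:ℝ) ≤ (T:ℝ) := by exact_mod_cast hT3
    have h1 : Real.sin (2 * π / (3 * (T:ℝ) + 2)) < 2 * π / (3 * (T:ℝ) + 2) :=
      Real.sin_lt (by positivity)
    have h2 : 2/π * ((T:ℝ) * π / (3 * (T:ℝ) + 2)) ≤ Real.sin ((T:ℝ) * π / (3 * (T:ℝ) + 2)) := by
      apply Real.mul_le_sin (by positivity)
      rw [div_le_iff₀ hn]; nlinarith
    have h2' : 2 * (T:ℝ) / (3 * (T:ℝ) + 2) ≤ Real.sin ((T:ℝ) * π / (3 * (T:ℝ) + 2)) := by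
      have he : 2/π * ((T:ℝ) * π / (3 * (T:ℝ) + 2)) = 2 * (T:ℝ) / (3 * (T:ℝ) + 2) := by
        field_simp
      linarith [he ▸ h2]
    have hkey : π * (((T:ℝ)+1)*(2*(T:ℝ)+1)) ≤ 3*(T:ℝ)*(3*(T:ℝ)+1) := by
      have hA0 : (0:ℝ) ≤ ((T:ℝ)+1)*(2*(T:ℝ)+1) := by nlinarith
      nlinarith [mul_le_mul_of_nonneg_right Real.pi_lt_d2.le hA0, sq_nonneg ((T:ℝ)-3)]
    have hns1 := (lt_div_iff₀ hn).1 h1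
    have hns2 := (div_le_iff₀ hn).1 h2'
    have hA : (0:ℝ) < ((T:ℝ)+1)*(2*(T:ℝ)+1) := by nlinarith
    rw [← mul_lt_mul_iff_left₀ hn]
    nlinarith [mul_lt_mul_of_pos_left hns1 hA,
      mul_le_mul_of_nonneg_left hns2 (show (0:ℝ) ≤ 3*(3*(T:ℝ)+1) by linarith)]

theorem deriv_roots_on_circle (T : ℕ) (hT : 1 ≤ T) :
    let aT : ℝ := Real.sin (2 * π / (3 * T + 2)) / Real.sin (T * π / (3 * T + 2))
    let S : Polynomial ℂ :=
      X + C (((2 * (T : ℂ) + 1) / (3 * T + 1)) * (aT : ℂ)) * X ^ (T + 1) +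
        C ((((T : ℂ) + 1) / (3 * T + 1)) * (aT : ℂ)) * X ^ (2 * T + 1) +
        C (1 / (3 * (T : ℂ) + 1)) * X ^ (3 * T + 1)
    (∀ z ∈ (derivative S).roots, ‖z‖ = 1) ∧
      (derivative S).roots.Nodup ∧ Multiset.card (derivative S).roots = 3 * T := by
  intro aT S
  have hT0 : T ≠ 0 := by omega
  have hTC : ((T:ℂ)) ≠ 0 := Nat.cast_ne_zero.2 hT0
  have hTC' : (3 * (T:ℂ) + 1) ≠ 0 := by
    have : ((3 * T + 1 : ℕ) : ℂ) ≠ 0 := Nat.cast_ne_zero.2 (by omega)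
    push_cast at this
    exact this
  have haT0 : 0 < aT := (b_bounds T hT).1
  have hb3 : ((T:ℝ) + 1) * (2 * (T:ℝ) + 1) / (3 * (T:ℝ) + 1) * aT < 3 := (b_bounds T hT).2
  set b : ℝ := ((T:ℝ) + 1) * (2 * (T:ℝ) + 1) / (3 * (T:ℝ) + 1) * aT with hbdef
  have ht : (1:ℝ) ≤ (T:ℝ) := by exact_mod_cast hT
  have hb0 : 0 < b := by
    apply mul_pos _ haT0
    positivity
  have hdiscr : 0 < 4 - (b-1)^2 := by nlinarith
  have hd0 : 0 < Real.sqrt (4 - (b-1)^2) := Real.sqrt_pos.2 hdiscr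
  set d : ℝ := Real.sqrt (4 - (b-1)^2) with hddef
  have hd2 : d^2 = 4 - (b-1)^2 := Real.sq_sqrt hdiscr.le
  set w₁ : ℂ := (((1-b)/2 : ℝ) : ℂ) + ((d/2 : ℝ) : ℂ) * Complex.I with hw1
  set w₂ : ℂ := (((1-b)/2 : ℝ) : ℂ) - ((d/2 : ℝ) : ℂ) * Complex.I with hw2
  have hsum : w₁ + w₂ = 1 - (b:ℂ) := by rw [hw1, hw2]; push_cast; ring
  have h4 : ((1-b)^2 + d^2 : ℝ) = 4 := by nlinarith
  have hprod : w₁ * w₂ = 1 := by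
    have h4c : ((1:ℂ) - (b:ℂ))^2 + ((d:ℝ):ℂ)^2 = 4 := by exact_mod_cast h4
    rw [hw1, hw2]
    push_cast
    linear_combination (1/4 : ℂ) * h4c - (((d:ℝ):ℂ)^2/4) * Complex.I_sq
  have hre1 : w₁.re = (1-b)/2 := by rw [hw1]; simp
  have hre2 : w₂.re = (1-b)/2 := by rw [hw2]; simp
  have him1 : w₁.im = d/2 := by rw [hw1]; simp
  have him2 : w₂.im = -(d/2) := by rw [hw2]; simp
  have habs1 : ‖w₁‖ = 1 := by
    have hns : Complex.normSq w₁ = 1 := by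
      rw [Complex.normSq_apply, hre1, him1]; nlinarith
    rw [Complex.norm_def, hns, Real.sqrt_one]
  have habs2 : ‖w₂‖ = 1 := by
    have hns : Complex.normSq w₂ = 1 := by
      rw [Complex.normSq_apply, hre2, him2]; nlinarith
    rw [Complex.norm_def, hns, Real.sqrt_one]
  have hw12 : w₁ ≠ w₂ := by
    intro h
    have h2 := congrArg Complex.im h
    rw [him1, him2] at h2; linarith
  have hw1n : (-1:ℂ) ≠ w₁ := by
    intro h
    have h2 := congrArg Complex.im h.symm
    rw [him1] at h2
    simp at h2; linarith
  have hw2n : (-1:ℂ) ≠ w₂ := by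
    intro h
    have h2 := congrArg Complex.im h.symm
    rw [him2] at h2
    simp at h2; linarith
  have hw1ne0 : w₁ ≠ 0 := by
    intro h; rw [h] at habs1; simp at habs1
  have hw2ne0 : w₂ ≠ 0 := by
    intro h; rw [h] at habs2; simp at habs2
  have h1 : (2 * (T:ℂ) + 1) / (3 * (T:ℂ) + 1) * ((aT:ℝ):ℂ) * ((T:ℂ) + 1) = ((b:ℝ):ℂ) := by
    rw [hbdef]; push_cast; ring
  have h2 : ((T:ℂ) + 1) / (3 * (T:ℂ) + 1) * ((aT:ℝ):ℂ) * (2 * (T:ℂ) + 1) = ((b:ℝ):ℂ) := by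
    rw [hbdef]; push_cast; ring
  have hfact : derivative S = (X ^ T - C (-1:ℂ)) * ((X ^ T - C w₁) * (X ^ T - C w₂)) := by
    simp only [S, derivative_add, derivative_C_mul, derivative_X_pow, derivative_X,
      Nat.add_sub_cancel]
    push_cast
    rw [show (2*T) = T*2 by ring, show (3*T) = T*3 by ring, pow_mul, pow_mul]
    simp only [C_neg, C_1]
    have hc1C : C ((2 * (T:ℂ) + 1) / (3 * (T:ℂ) + 1) * ((aT:ℝ):ℂ)) * C ((T:ℂ) + 1)
        = C ((b:ℝ):ℂ) := by rw [← C_mul, h1]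
    have hc2C : C (((T:ℂ) + 1) / (3 * (T:ℂ) + 1) * ((aT:ℝ):ℂ)) * C (2 * (T:ℂ) + 1)
        = C ((b:ℝ):ℂ) := by rw [← C_mul, h2]
    have hc3C : C ((1:ℂ) / (3 * (T:ℂ) + 1)) * C (3 * (T:ℂ) + 1) = 1 := by
      rw [← C_mul, one_div_mul_cancel hTC', C_1]
    have hsC : C w₁ + C w₂ = 1 - C ((b:ℝ):ℂ) := by rw [← C_add, hsum, C_sub, C_1]
    have hpC : C w₁ * C w₂ = 1 := by rw [← C_mul, hprod, C_1]
    linear_combination (X^T:ℂ[X]) * hc1C + ((X^T:ℂ[X])^2) * hc2C + ((X^T:ℂ[X])^3) * hc3C +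
      ((X^T:ℂ[X])^2 + (X^T:ℂ[X])) * hsC - ((X^T:ℂ[X]) + 1) * hpC
  have hmon : ∀ w : ℂ, (X^T - C w : ℂ[X]) ≠ 0 := fun w => (monic_X_pow_sub_C w hT0).ne_zero
  have hmem : ∀ w z : ℂ, z ∈ (X^T - C w : ℂ[X]).roots ↔ z^T = w := by
    intro w z
    rw [show (X^T - C w : ℂ[X]).roots = nthRoots T w from rfl,
      mem_nthRoots (Nat.pos_of_ne_zero hT0)]
  have hnod : ∀ w : ℂ, w ≠ 0 → (X^T - C w : ℂ[X]).roots.Nodup := fun w hw =>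
    nodup_roots (separable_X_pow_sub_C w hTC hw)
  have hcard : ∀ w : ℂ, Multiset.card (X^T - C w : ℂ[X]).roots = T := by
    intro w
    have hs := (splits_iff_card_roots (f := (X^T - C w : ℂ[X]))).1 (IsAlgClosed.splits _)
    rwa [natDegree_X_pow_sub_C] at hs
  have hdisj : ∀ w w' : ℂ, w ≠ w' → Disjoint (X^T - C w : ℂ[X]).roots (X^T - C w' : ℂ[X]).roots := by
    intro w w' hne
    rw [Multiset.disjoint_left]
    intro z hz hz'
    exact hne (((hmem w z).1 hz).symm.trans ((hmem w' z).1 hz'))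
  have hroots : (derivative S).roots
      = (X^T - C (-1:ℂ)).roots + ((X^T - C w₁).roots + (X^T - C w₂).roots) := by
    rw [hfact, roots_mul (mul_ne_zero (hmon _) (mul_ne_zero (hmon _) (hmon _))),
      roots_mul (mul_ne_zero (hmon _) (hmon _))]
  have habsroot : ∀ (w z : ℂ), ‖w‖ = 1 → z ∈ (X^T - C w : ℂ[X]).roots →
      ‖z‖ = 1 := by
    intro w z hw hz
    have hzT : ‖z‖ ^ T = 1 := by
      rw [← norm_pow, (hmem w z).1 hz, hw]
    rcases lt_trichotomy (‖z‖) 1 with h | h | h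
    · have := pow_lt_one₀ (norm_nonneg z) h hT0
      linarith
    · exact h
    · have := one_lt_pow₀ h hT0
      linarith
  refine ⟨?_, ?_, ?_⟩
  · intro z hz
    rw [hroots, Multiset.mem_add, Multiset.mem_add] at hz
    rcases hz with hz | hz | hz
    · exact habsroot _ _ (by simp) hz
    · exact habsroot _ _ habs1 hz
    · exact habsroot _ _ habs2 hz
  · rw [hroots, Multiset.nodup_add, Multiset.nodup_add, Multiset.disjoint_add_right]
    exact ⟨hnod _ (by norm_num), ⟨hnod _ hw1ne0, hnod _ hw2ne0, hdisj _ _ hw12⟩,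
      hdisj _ _ hw1n, hdisj _ _ hw2n⟩
  · rw [hroots, Multiset.card_add, Multiset.card_add, hcard, hcard, hcard]
    ring
end

section
/- For integers T ≥ 3 and integers k with 0 < k < 3T+1, one has (3T+1)·sin(πk/(3T+1)) / (v_T·|sin(Tπk/(3T+1))|) ≥ (3T+1)/(3T) > 1, where v_T = (T+1)·sin(2π/(3T+2))/sin(Tπ/(3T+2)); here sin(Tπk/(3T+1)) ≠ 0 since gcd(T, 3T+1) = 1 and gcd(2T+1, 3T+1) = 1. -/
open Real

private lemma aux_sqrt3_bounds : 1.73205 ≤ Real.sqrt 3 ∧ Real.sqrt 3 ≤ 1.73206 := by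
  have h : Real.sqrt 3 ^ 2 = 3 := Real.sq_sqrt (by norm_num)
  have h0 : (0:ℝ) ≤ Real.sqrt 3 := Real.sqrt_nonneg 3
  constructor <;> nlinarith

private lemma aux_A {t : ℝ} (ht : 3 ≤ t) : 3.064 / (3*t+1) ≤ Real.sin (π / (3*t+1)) := by
  have hπ1 : 3.141592 < π := Real.pi_gt_d6
  have hπ2 : π < 3.141593 := Real.pi_lt_d6
  have hN : (10:ℝ) ≤ 3*t+1 := by linarith
  have hN0 : (0:ℝ) < 3*t+1 := by linarith
  have hx0 : 0 < π / (3*t+1) := by positivity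
  have hx1 : π / (3*t+1) ≤ 1 := by rw [div_le_one hN0]; linarith
  have hs := Real.sin_gt_sub_cube hx0
  have hcpos : (0:ℝ) ≤ 0.3101/(3*t+1) := by positivity
  have hcube : (π / (3*t+1))^3 ≤ 0.3101 / (3*t+1) := by
    rw [div_pow, div_le_div_iff₀ (by positivity) hN0]
    have h1 : π^3 ≤ 31.007 := by nlinarith [Real.pi_pos, mul_pos Real.pi_pos Real.pi_pos]
    nlinarith [sq_nonneg (3*t+1), hN, hN0, h1]
  have hpiN : 3.141592/(3*t+1) ≤ π/(3*t+1) := by gcongr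
  have he : 3.141592/(3*t+1) - (0.3101/(3*t+1))/4 = 3.064067/(3*t+1) := by ring
  have hfin : 3.064/(3*t+1) ≤ 3.064067/(3*t+1) := by gcongr <;> norm_num
  linarith

private lemma aux_B {t : ℝ} (ht : 3 ≤ t) : 0.866 - 1.22/(3*t+2) ≤ Real.sin (t * π / (3*t+2)) := by
  have hπ1 : 3.141592 < π := Real.pi_gt_d6
  have hπ2 : π < 3.141593 := Real.pi_lt_d6
  have hM : (11:ℝ) ≤ 3*t+2 := by linarith
  have hM0 : (0:ℝ) < 3*t+2 := by linarith
  have hs3sq : Real.sqrt 3 ^ 2 = 3 := Real.sq_sqrt (by norm_num)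
  have hs30 : (0:ℝ) ≤ Real.sqrt 3 := Real.sqrt_nonneg 3
  obtain ⟨hs3l, hs3u⟩ := aux_sqrt3_bounds
  have he : t * π / (3*t+2) = π/3 - 2*π/(3*(3*t+2)) := by field_simp; ring
  rw [he, Real.sin_sub, Real.sin_pi_div_three, Real.cos_pi_div_three]
  set δ : ℝ := 2*π/(3*(3*t+2)) with hδ
  have hδ0 : 0 ≤ δ := by positivity
  clear_value δ
  have hδu : δ ≤ 2.0944/(3*t+2) := by
    rw [hδ, div_le_div_iff₀ (by positivity) hM0]
    nlinarith
  have hcos : 1 - δ^2/2 ≤ Real.cos δ := Real.one_sub_sq_div_two_le_cos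
  have hsin : Real.sin δ ≤ δ := Real.sin_le hδ0
  have hδsq : δ^2 ≤ 0.399/(3*t+2) := by
    have h1 : δ^2 ≤ (2.0944/(3*t+2))^2 := by nlinarith
    have h2 : (2.0944/(3*t+2))^2 ≤ 0.399/(3*t+2) := by
      rw [div_pow, div_le_div_iff₀ (by positivity) hM0]
      nlinarith
    linarith
  have h3 : Real.sqrt 3/2 - (Real.sqrt 3/4)*δ^2 ≤ Real.sqrt 3/2 * Real.cos δ := by nlinarith
  have h4 : (Real.sqrt 3/4)*δ^2 ≤ 0.1728/(3*t+2) := by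
    have hh : (Real.sqrt 3/4)*δ^2 ≤ (1.73206/4)*(0.399/(3*t+2)) := by
      apply mul_le_mul (by linarith) hδsq (by nlinarith) (by norm_num)
    calc (Real.sqrt 3/4)*δ^2 ≤ (1.73206/4)*(0.399/(3*t+2)) := hh
      _ = 0.172772985/(3*t+2) := by ring
      _ ≤ 0.1728/(3*t+2) := by gcongr <;> norm_num
  have h5 : Real.sin δ / 2 ≤ 1.0472/(3*t+2) := by
    calc Real.sin δ / 2 ≤ δ/2 := by linarith
      _ ≤ (2.0944/(3*t+2))/2 := by linarith
      _ = 1.0472/(3*t+2) := by ring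
  have h6 : (0.866025:ℝ) ≤ Real.sqrt 3/2 := by linarith
  have h7 : (0.1728:ℝ)/(3*t+2) + 1.0472/(3*t+2) = 1.22/(3*t+2) := by ring
  linarith

private lemma aux_122 {t : ℝ} (ht : 3 ≤ t) : (1.22:ℝ)/(3*t+2) ≤ 0.111 := by
  rw [div_le_iff₀ (by linarith)]; linarith

private lemma aux_B0 {t : ℝ} (ht : 3 ≤ t) : 0 < Real.sin (t * π / (3*t+2)) := by
  have := aux_B ht
  have := aux_122 ht
  linarith

private lemma aux_C0 {t : ℝ} (ht : 3 ≤ t) : 0 < Real.sin (2*π/(3*t+2)) := by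
  have hπ0 := Real.pi_pos
  apply Real.sin_pos_of_pos_of_lt_pi (by positivity)
  rw [div_lt_iff₀ (by linarith)]; nlinarith

private lemma aux_C_ub {t : ℝ} (ht : 3 ≤ t) : Real.sin (2*π/(3*t+2)) ≤ 6.28319/(3*t+2) := by
  have hπ2 : π < 3.141593 := Real.pi_lt_d6
  have hπ0 := Real.pi_pos
  calc Real.sin (2*π/(3*t+2)) ≤ 2*π/(3*t+2) := Real.sin_le (by positivity)
    _ ≤ 6.28319/(3*t+2) := by gcongr; linarith

private lemma aux_D0 {t : ℝ} (ht : 3 ≤ t) : 0 ≤ Real.sin (t*π/(3*t+1)) := by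
  have hπ0 := Real.pi_pos
  apply Real.sin_nonneg_of_nonneg_of_le_pi (by positivity)
  rw [div_le_iff₀ (by linarith)]; nlinarith

private lemma aux_D_ub {t : ℝ} (ht : 3 ≤ t) : Real.sin (t*π/(3*t+1)) ≤ 0.86603 := by
  have hπ0 := Real.pi_pos
  obtain ⟨hs3l, hs3u⟩ := aux_sqrt3_bounds
  have htN_le : t*π/(3*t+1) ≤ π/3 := by
    rw [div_le_div_iff₀ (by linarith) (by norm_num : (0:ℝ) < 3)]
    nlinarith
  have h1 : Real.sin (t*π/(3*t+1)) ≤ Real.sin (π/3) := by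
    apply Real.sin_le_sin_of_le_of_le_pi_div_two _ (by linarith) htN_le
    have : 0 ≤ t*π/(3*t+1) := by positivity
    linarith
  rw [Real.sin_pi_div_three] at h1
  linarith

private lemma aux_NUM1 {t : ℝ} (ht : 3 ≤ t) :
    (t+1)*(6.28319/(3*t+2))*0.86603 ≤ 3*t*(3.064/(3*t+1))*(0.866-1.22/(3*t+2)) := by
  have hN0 : (0:ℝ) < 3*t+1 := by linarith
  have hM0 : (0:ℝ) < 3*t+2 := by linarith
  rw [← sub_nonneg]
  have hre : 3*t*(3.064/(3*t+1))*(0.866-1.22/(3*t+2)) - (t+1)*(6.28319/(3*t+2))*0.86603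
      = (3*t*3.064*(0.866*(3*t+2)-1.22) - (t+1)*6.28319*0.86603*(3*t+1)) / ((3*t+1)*(3*t+2)) := by
    field_simp
  rw [hre]
  apply div_nonneg _ (mul_pos hN0 hM0).le
  nlinarith [sq_nonneg (t-3)]

private lemma aux_P1 {t : ℝ} (ht : 3 ≤ t) :
    (t + 1) * Real.sin (2 * π / (3 * t + 2)) / Real.sin (t * π / (3 * t + 2))
      * Real.sin (t*π/(3*t+1)) ≤ 3*t * Real.sin (π/(3*t+1)) := by
  have hN0 : (0:ℝ) < 3*t+1 := by linarith
  have hsB0 := aux_B0 ht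
  have hsA := aux_A ht
  have hsA0 : (0:ℝ) < 3.064/(3*t+1) := by positivity
  rw [div_mul_eq_mul_div, div_le_iff₀ hsB0]
  have step1 : (t+1) * Real.sin (2*π/(3*t+2)) * Real.sin (t*π/(3*t+1))
      ≤ (t+1) * (6.28319/(3*t+2)) * 0.86603 := by
    apply mul_le_mul _ (aux_D_ub ht) (aux_D0 ht) (mul_nonneg (by linarith) (by positivity))
    apply mul_le_mul le_rfl (aux_C_ub ht) (aux_C0 ht).le (by linarith)
  have step3 : 3*t*(3.064/(3*t+1))*(0.866-1.22/(3*t+2))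
      ≤ 3*t*Real.sin (π/(3*t+1))*Real.sin (t*π/(3*t+2)) := by
    apply mul_le_mul _ (aux_B ht) (by linarith [aux_122 ht]) _
    · apply mul_le_mul le_rfl hsA (by positivity) (by linarith)
    · apply mul_nonneg (by linarith); linarith
  linarith [aux_NUM1 ht]

private lemma aux_P2 {t : ℝ} (ht : 3 ≤ t) :
    (t + 1) * Real.sin (2 * π / (3 * t + 2)) / Real.sin (t * π / (3 * t + 2))
      ≤ 3*t * Real.sin (2*π/(3*t+1)) := by
  have hπ0 := Real.pi_pos
  have hN0 : (0:ℝ) < 3*t+1 := by linarith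
  have hsB0 := aux_B0 ht
  have hsB755 : 0.755 ≤ Real.sin (t * π / (3*t+2)) := by linarith [aux_B ht, aux_122 ht]
  have hs2N_half : 2*π/(3*t+1) ≤ π/2 := by
    rw [div_le_div_iff₀ hN0 (by norm_num : (0:ℝ) < 2)]
    nlinarith
  have hs2N0 : 0 ≤ Real.sin (2*π/(3*t+1)) := by
    apply Real.sin_nonneg_of_nonneg_of_le_pi (by positivity)
    linarith
  have hsC_le : Real.sin (2*π/(3*t+2)) ≤ Real.sin (2*π/(3*t+1)) := by
    apply Real.sin_le_sin_of_le_of_le_pi_div_two _ hs2N_half (by gcongr <;> linarith)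
    have : (0:ℝ) ≤ 2*π/(3*t+2) := by positivity
    linarith
  rw [div_le_iff₀ hsB0]
  have s1 : (t+1) * Real.sin (2*π/(3*t+2)) ≤ (t+1) * Real.sin (2*π/(3*t+1)) :=
    mul_le_mul le_rfl hsC_le (aux_C0 ht).le (by linarith)
  nlinarith [mul_le_mul_of_nonneg_left hsB755 (mul_nonneg (by linarith : (0:ℝ) ≤ 3*t) hs2N0),
    mul_nonneg (mul_nonneg (by linarith : (0:ℝ) ≤ 3*t) hs2N0) (by norm_num : (0:ℝ) ≤ 1 - 0.755)]

private lemma aux_v_pos {t : ℝ} (ht : 3 ≤ t) :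
    0 < (t + 1) * Real.sin (2 * π / (3 * t + 2)) / Real.sin (t * π / (3 * t + 2)) :=
  div_pos (mul_pos (by linarith) (aux_C0 ht)) (aux_B0 ht)

theorem quadratic_case_product (T : ℕ) (hT : 3 ≤ T) (k : ℕ) (hk0 : 0 < k) (hk : k < 3 * T + 1) :
    let vT : ℝ := ((T : ℝ) + 1) * Real.sin (2 * π / (3 * T + 2)) / Real.sin (T * π / (3 * T + 2))
    Real.sin ((T : ℝ) * π * k / (3 * T + 1)) ≠ 0 ∧
      (3 * (T : ℝ) + 1) * Real.sin (π * k / (3 * T + 1)) /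
          (vT * |Real.sin ((T : ℝ) * π * k / (3 * T + 1))|) ≥ (3 * (T : ℝ) + 1) / (3 * T) ∧
      (3 * (T : ℝ) + 1) / (3 * T) > 1 := by
  intro vT
  have hv : vT = ((T:ℝ) + 1) * Real.sin (2 * π / (3 * (T:ℝ) + 2)) / Real.sin ((T:ℝ) * π / (3 * (T:ℝ) + 2)) := rfl
  clear_value vT
  have ht : (3:ℝ) ≤ (T:ℝ) := by exact_mod_cast hT
  have hπ0 : 0 < π := Real.pi_pos
  have hN0 : (0:ℝ) < 3*(T:ℝ)+1 := by linarith
  have hvT0 : 0 < vT := hv ▸ aux_v_pos ht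
  -- Part 1 : sin ≠ 0
  have hne : Real.sin ((T:ℝ) * π * k / (3 * (T:ℝ) + 1)) ≠ 0 := by
    intro h
    rw [Real.sin_eq_zero_iff] at h
    obtain ⟨n, hn⟩ := h
    have hNne : (3*(T:ℝ)+1) ≠ 0 := ne_of_gt hN0
    field_simp at hn
    have h2 : ((n:ℝ)*(3*(T:ℝ)+1))*π = (((T:ℝ))*(k:ℝ))*π := by linear_combination π * hn
    have hZ : (n:ℝ)*(3*(T:ℝ)+1) = (T:ℝ)*(k:ℝ) := mul_right_cancel₀ (ne_of_gt hπ0) h2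
    have hZ' : n * (3*(T:ℤ)+1) = (T:ℤ)*(k:ℤ) := by exact_mod_cast hZ
    have hcop : IsCoprime (3*(T:ℤ)+1) (T:ℤ) := ⟨1, -3, by ring⟩
    have hdvd : (3*(T:ℤ)+1) ∣ (T:ℤ)*(k:ℤ) := ⟨n, by rw [← hZ']; ring⟩
    have hdk : (3*(T:ℤ)+1) ∣ (k:ℤ) := hcop.dvd_of_dvd_mul_left hdvd
    have hkpos : (0:ℤ) < (k:ℤ) := by exact_mod_cast hk0
    have h4 := Int.le_of_dvd hkpos hdk
    have hk' : (k:ℤ) < 3*(T:ℤ)+1 := by exact_mod_cast hk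
    omega
  -- KEY inequality
  have KEY : vT * |Real.sin ((T:ℝ) * π * k / (3*(T:ℝ)+1))| ≤ 3*(T:ℝ) * Real.sin (π * k / (3*(T:ℝ)+1)) := by
    by_cases hk1 : k = 1
    · subst hk1
      have e1 : ((T:ℝ) * π * ((1:ℕ):ℝ) / (3*(T:ℝ)+1)) = (T:ℝ)*π/(3*(T:ℝ)+1) := by push_cast; ring
      have e2 : (π * ((1:ℕ):ℝ) / (3*(T:ℝ)+1)) = π/(3*(T:ℝ)+1) := by push_cast; ring
      rw [e1, e2, abs_of_nonneg (aux_D0 ht), hv]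
      exact aux_P1 ht
    · by_cases hk2 : k = 3*T
      · subst hk2
        have ek : ((3*T : ℕ) : ℝ) = 3*(T:ℝ) := by push_cast; ring
        have eI : ((T:ℤ):ℝ) = (T:ℝ) := by push_cast; ring
        have e2 : (π * ((3*T : ℕ):ℝ) / (3*(T:ℝ)+1)) = π - π/(3*(T:ℝ)+1) := by
          rw [ek]; field_simp; ring
        have e1 : ((T:ℝ) * π * ((3*T : ℕ):ℝ) / (3*(T:ℝ)+1)) = -((T:ℝ)*π/(3*(T:ℝ)+1)) + (T:ℤ)*π := by
          rw [ek, eI]; field_simp; ring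
        rw [e1, e2, Real.sin_pi_sub, Real.sin_add_int_mul_pi]
        rw [abs_mul]
        simp only [zpow_natCast, abs_pow, abs_neg, abs_one, one_pow, one_mul, Real.sin_neg, abs_neg]
        rw [abs_of_nonneg (aux_D0 ht), hv]
        exact aux_P1 ht
      · have hk2' : 2 ≤ k := by omega
        have hk2u : k + 1 ≤ 3*T := by omega
        have hkr2 : (2:ℝ) ≤ (k:ℝ) := by exact_mod_cast hk2'
        have hkru : (k:ℝ) ≤ 3*(T:ℝ) - 1 := by
          have h9 : ((k:ℝ)) + 1 ≤ 3*(T:ℝ) := by exact_mod_cast hk2u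
          linarith
        have hmid : Real.sin (2*π/(3*(T:ℝ)+1)) ≤ Real.sin (π * k / (3*(T:ℝ)+1)) := by
          have h2N : 2*π/(3*(T:ℝ)+1) ≤ π*k/(3*(T:ℝ)+1) :=
            (div_le_div_iff_of_pos_right hN0).mpr (by nlinarith)
          have hq : π*(3*(T:ℝ)-1)/(3*(T:ℝ)+1) = π - 2*π/(3*(T:ℝ)+1) := by field_simp; ring
          have hyub : π*k/(3*(T:ℝ)+1) ≤ π - 2*π/(3*(T:ℝ)+1) := by
            rw [← hq]; exact (div_le_div_iff_of_pos_right hN0).mpr (by nlinarith)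
          have h2N0 : (0:ℝ) ≤ 2*π/(3*(T:ℝ)+1) := by positivity
          rcases le_or_gt (π*k/(3*(T:ℝ)+1)) (π/2) with hc | hc
          · exact Real.sin_le_sin_of_le_of_le_pi_div_two (by linarith) hc h2N
          · rw [show Real.sin (π*(k:ℝ)/(3*(T:ℝ)+1)) = Real.sin (π - π*(k:ℝ)/(3*(T:ℝ)+1)) from (Real.sin_pi_sub _).symm]
            exact Real.sin_le_sin_of_le_of_le_pi_div_two (by linarith) (by linarith) (by linarith)
        have hs2N0 : 0 ≤ Real.sin (2*π/(3*(T:ℝ)+1)) := by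
          apply Real.sin_nonneg_of_nonneg_of_le_pi (by positivity)
          rw [div_le_iff₀ hN0]; nlinarith
        calc vT * |Real.sin ((T:ℝ) * π * k / (3*(T:ℝ)+1))| ≤ vT * 1 :=
              mul_le_mul le_rfl (Real.abs_sin_le_one _) (abs_nonneg _) hvT0.le
          _ = vT := mul_one vT
          _ ≤ 3*(T:ℝ) * Real.sin (2*π/(3*(T:ℝ)+1)) := hv ▸ aux_P2 ht
          _ ≤ 3*(T:ℝ) * Real.sin (π * k / (3*(T:ℝ)+1)) :=
              mul_le_mul le_rfl hmid hs2N0 (by linarith)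
  refine ⟨hne, ?_, ?_⟩
  · have habs0 : 0 < |Real.sin ((T:ℝ) * π * k / (3*(T:ℝ)+1))| := abs_pos.mpr hne
    rw [ge_iff_le, div_le_div_iff₀ (by linarith : (0:ℝ) < 3*(T:ℝ)) (mul_pos hvT0 habs0)]
    calc (3*(T:ℝ)+1) * (vT * |Real.sin ((T:ℝ) * π * k / (3*(T:ℝ)+1))|)
        ≤ (3*(T:ℝ)+1) * (3*(T:ℝ) * Real.sin (π * k / (3*(T:ℝ)+1))) :=
          mul_le_mul_of_nonneg_left KEY (by linarith)
      _ = (3*(T:ℝ)+1) * Real.sin (π * k / (3*(T:ℝ)+1)) * (3*(T:ℝ)) := by ring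
  · rw [gt_iff_lt, lt_div_iff₀ (by linarith : (0:ℝ) < 3*(T:ℝ))]
    linarith
end

section
/- For complex numbers x, y on the unit circle with x ≠ y, writing x = e^{iX}, y = e^{iY}, γ = (X−Y)/2, w = e^{iT(X+Y)/2}, the difference quotient (S₄^{(T)}(x) − S₄^{(T)}(y))/(x − y) equals 1 + ((2T+1)/(3T+1))·(sin((T+1)γ)/sin γ)·a_T·w + ((T+1)/(3T+1))·(sin((2T+1)γ)/sin γ)·a_T·w² + (sin((3T+1)γ)/((3T+1)·sin γ))·w³, provided sin γ ≠ 0. -/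
open Real Complex

lemma exp_sub_exp' (a b : ℝ) :
    Complex.exp (Complex.I * a) - Complex.exp (Complex.I * b)
      = 2 * Complex.I * ((Real.sin ((a - b) / 2) : ℝ) : ℂ) *
          Complex.exp (Complex.I * ((a : ℂ) + b) / 2) := by
  rw [Complex.ofReal_sin, Complex.sin,
    show Complex.I * (a : ℂ) = (((a - b) / 2 : ℝ) : ℂ) * Complex.I
        + Complex.I * ((a : ℂ) + b) / 2 by push_cast; ring,
    show Complex.I * (b : ℂ) = -((((a - b) / 2 : ℝ) : ℂ)) * Complex.I
        + Complex.I * ((a : ℂ) + b) / 2 by push_cast; ring,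
    Complex.exp_add, Complex.exp_add]
  rw [show -((((a - b) / 2 : ℝ) : ℂ)) * Complex.I = -((((a - b) / 2 : ℝ) : ℂ) * Complex.I) by ring,
    Complex.exp_neg]
  have h := Complex.exp_ne_zero ((((a - b) / 2 : ℝ) : ℂ) * Complex.I)
  field_simp
  linear_combination (Complex.exp ((((a - b) / 2 : ℝ) : ℂ) * Complex.I) ^ 2 - 1) * Complex.I_sq

theorem difference_quotient_formula (T : ℕ) (hT : 1 ≤ T) (X Y : ℝ)
    (hXY : Real.sin ((X - Y) / 2) ≠ 0) :
    let aT : ℝ := Real.sin (2 * π / (3 * T + 2)) / Real.sin (T * π / (3 * T + 2))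
    let S : ℂ → ℂ := fun z =>
      z + ((2 * (T : ℂ) + 1) / (3 * T + 1)) * (aT : ℂ) * z ^ (T + 1) +
        (((T : ℂ) + 1) / (3 * T + 1)) * (aT : ℂ) * z ^ (2 * T + 1) +
        (1 / (3 * (T : ℂ) + 1)) * z ^ (3 * T + 1)
    let γ : ℝ := (X - Y) / 2
    let w : ℂ := Complex.exp (Complex.I * T * (X + Y) / 2)
    (S (Complex.exp (Complex.I * X)) - S (Complex.exp (Complex.I * Y))) /
        (Complex.exp (Complex.I * X) - Complex.exp (Complex.I * Y)) =
      1 + ((2 * (T : ℂ) + 1) / (3 * T + 1)) *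
            ((Real.sin ((T + 1) * γ) / Real.sin γ : ℝ) : ℂ) * (aT : ℂ) * w +
        (((T : ℂ) + 1) / (3 * T + 1)) *
            ((Real.sin ((2 * T + 1) * γ) / Real.sin γ : ℝ) : ℂ) * (aT : ℂ) * w ^ 2 +
        ((Real.sin ((3 * T + 1) * γ) / ((3 * T + 1) * Real.sin γ) : ℝ) : ℂ) * w ^ 3 := by
  intro aT S γ w
  have hS : S = fun z =>
      z + ((2 * (T : ℂ) + 1) / (3 * T + 1)) * (aT : ℂ) * z ^ (T + 1) +
        (((T : ℂ) + 1) / (3 * T + 1)) * (aT : ℂ) * z ^ (2 * T + 1) +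
        (1 / (3 * (T : ℂ) + 1)) * z ^ (3 * T + 1) := rfl
  have hγ : γ = (X - Y) / 2 := rfl
  set x := Complex.exp (Complex.I * X) with hx
  set y := Complex.exp (Complex.I * Y) with hy
  set u : ℂ := Complex.exp (Complex.I * ((X : ℂ) + Y) / 2) with hu
  have hkey : ∀ n : ℕ, x ^ n - y ^ n
      = 2 * Complex.I * ((Real.sin (n * γ) : ℝ) : ℂ) * u ^ n := by
    intro n
    have h := exp_sub_exp' (n * X) (n * Y)
    rw [show ((n * X - n * Y) / 2 : ℝ) = n * γ by rw [hγ]; ring] at h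
    rw [hx, hy, hu, ← Complex.exp_nat_mul, ← Complex.exp_nat_mul, ← Complex.exp_nat_mul,
      show (n : ℂ) * (Complex.I * X) = Complex.I * ((n * X : ℝ) : ℂ) by push_cast; ring,
      show (n : ℂ) * (Complex.I * Y) = Complex.I * ((n * Y : ℝ) : ℂ) by push_cast; ring,
      show (n : ℂ) * (Complex.I * ((X : ℂ) + Y) / 2)
          = Complex.I * (((n * X : ℝ) : ℂ) + ((n * Y : ℝ) : ℂ)) / 2 by push_cast; ring,
      h]
  have hw : w = u ^ T := by
    rw [hu, ← Complex.exp_nat_mul]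
    show Complex.exp (Complex.I * T * ((X : ℂ) + Y) / 2) = _
    ring_nf
  have hxy : x - y = 2 * Complex.I * ((Real.sin γ : ℝ) : ℂ) * u := by
    have h := hkey 1
    simpa using h
  have hsin : ((Real.sin γ : ℝ) : ℂ) ≠ 0 := by
    rw [hγ]; exact_mod_cast hXY
  have hd : x - y ≠ 0 := by
    rw [hxy]
    exact mul_ne_zero (mul_ne_zero (by norm_num [Complex.I_ne_zero]) hsin) (Complex.exp_ne_zero _)
  have h31 : (3 * (T : ℂ) + 1) ≠ 0 := by
    have : ((3 * T + 1 : ℕ) : ℂ) ≠ 0 := Nat.cast_ne_zero.mpr (by omega)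
    push_cast at this
    exact this
  rw [div_eq_iff hd]
  have expand : S x - S y
      = (x - y) + ((2 * (T : ℂ) + 1) / (3 * T + 1)) * (aT : ℂ) * (x ^ (T + 1) - y ^ (T + 1)) +
        (((T : ℂ) + 1) / (3 * T + 1)) * (aT : ℂ) * (x ^ (2 * T + 1) - y ^ (2 * T + 1)) +
        (1 / (3 * (T : ℂ) + 1)) * (x ^ (3 * T + 1) - y ^ (3 * T + 1)) := by
    simp only [hS]; ring
  have k1 := hkey (T + 1)
  have k2 := hkey (2 * T + 1)
  have k3 := hkey (3 * T + 1)
  rw [show (((T + 1 : ℕ) : ℝ)) * γ = ((T : ℝ) + 1) * γ by push_cast; ring] at k1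
  rw [show (((2 * T + 1 : ℕ) : ℝ)) * γ = (2 * (T : ℝ) + 1) * γ by push_cast; ring] at k2
  rw [show (((3 * T + 1 : ℕ) : ℝ)) * γ = (3 * (T : ℝ) + 1) * γ by push_cast; ring] at k3
  have hT0 : (0 : ℝ) < T := by exact_mod_cast hT
  have hden : ((Real.sin ((T : ℝ) * π / (3 * T + 2)) : ℝ) : ℂ) ≠ 0 := by
    have h1 : (0 : ℝ) < (T : ℝ) * π / (3 * T + 2) := by positivity
    have h2 : (T : ℝ) * π / (3 * T + 2) < π := by
      rw [div_lt_iff₀ (by positivity)]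
      nlinarith [Real.pi_pos]
    exact_mod_cast (Real.sin_pos_of_pos_of_lt_pi h1 h2).ne'
  rw [expand, k1, k2, k3, hxy, hw]
  simp only [Complex.ofReal_div, Complex.ofReal_mul, Complex.ofReal_add, Complex.ofReal_one,
    Complex.ofReal_ofNat, Complex.ofReal_natCast]
  generalize hg1 : ((Real.sin γ : ℝ) : ℂ) = s1 at hsin ⊢
  generalize hgA : ((Real.sin (((T : ℝ) + 1) * γ) : ℝ) : ℂ) = sA
  generalize hgB : ((Real.sin ((2 * (T : ℝ) + 1) * γ) : ℝ) : ℂ) = sB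
  generalize hgC : ((Real.sin ((3 * (T : ℝ) + 1) * γ) : ℝ) : ℂ) = sC
  generalize hgp : ((Real.sin (2 * π / (3 * (T : ℝ) + 2)) : ℝ) : ℂ) = p
  generalize hgq : ((Real.sin ((T : ℝ) * π / (3 * (T : ℝ) + 2)) : ℝ) : ℂ) = q at hden
  generalize hgu : u = U
  field_simp
  ring
end
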